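/- Assume the F-expectation satisfies (H0)–(H7) and let {X(τ):τ∈S_0} be a CE admissible family with sup_{τ∈S_0} E[X(τ)] < ∞. Fix θ∈S_0 and define the modified reward X'(τ) = X(τ)1_{{τ≥θ}} − 1_{{τ<θ}} and the value function v'(S) = esssup_{τ∈S_S} E_S[X'(τ)] (well defined since X'(τ)+1 ∈ Dom⁺(E), setting E_S[X'(τ)] := E_S[X'(τ)+1] − 1). Then: for each S∈S_0 there exists an optimal stopping time for v'(S); the random time τ'(S) = essinf{τ∈S_S : v'(τ)=X'(τ) a.s.} is a stopping time and is the minimal optimal stopping time for v'(S), i.e. v'(S)=E_S[X'(τ'(S))] a.s. and τ'(S) ≤ τ a.s. for any τ∈S_S with v'(S)=E_S[X'(τ)] a.s.; and the family {v'(S):S∈S_0} is LCE. -/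

import Mathlib

open MeasureTheory Filter Set

noncomputable section

namespace OptMultStop

variable {Ω : Type*}

/-- A real function is right-continuous with left limits (RCLL) on `[0, T]`. -/
def RCLLOn (f : ℝ → ℝ) (T : ℝ) : Prop :=
  (∀ t ∈ Set.Ico (0 : ℝ) T, ContinuousWithinAt f (Set.Ici t) t) ∧
    ∀ t ∈ Set.Ioc (0 : ℝ) T, ∃ l : ℝ, Filter.Tendsto f (nhdsWithin t (Set.Iio t)) (nhds l)

/-- A real function is right-continuous on `[0, T)`. -/
def RCOn (f : ℝ → ℝ) (T : ℝ) : Prop :=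
  ∀ t ∈ Set.Ico (0 : ℝ) T, ContinuousWithinAt f (Set.Ici t) t

/-- `τ` is a stopping time for `ℱ` taking values in `[s ·, T]`; for `s = S` a stopping
time this encodes membership in `S_S`. -/
def IsStopIn [m : MeasurableSpace Ω] (ℱ : Filtration ℝ m) (T : ℝ) (s τ : Ω → ℝ) : Prop :=
  IsStoppingTime ℱ (fun ω => (τ ω : WithTop ℝ)) ∧ (∀ ω, s ω ≤ τ ω) ∧ ∀ ω, τ ω ≤ T

/-- Membership in `S_0`: a stopping time with values in `[0, T]`. -/
def Stop0 [m : MeasurableSpace Ω] (ℱ : Filtration ℝ m) (T : ℝ) (τ : Ω → ℝ) : Prop :=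
  IsStopIn ℱ T (fun _ => (0 : ℝ)) τ

/-- `g` is an essential supremum of the family of random variables `s`. -/
def IsEssSupFam [MeasurableSpace Ω] (μ : Measure Ω) (s : Set (Ω → ℝ)) (g : Ω → ℝ) : Prop :=
  (∀ f ∈ s, f ≤ᵐ[μ] g) ∧ ∀ h : Ω → ℝ, (∀ f ∈ s, f ≤ᵐ[μ] h) → g ≤ᵐ[μ] h

/-- `g` is an essential infimum of the family of random variables `s`. -/
def IsEssInfFam [MeasurableSpace Ω] (μ : Measure Ω) (s : Set (Ω → ℝ)) (g : Ω → ℝ) : Prop :=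
  (∀ f ∈ s, g ≤ᵐ[μ] f) ∧ ∀ h : Ω → ℝ, (∀ f ∈ s, h ≤ᵐ[μ] f) → h ≤ᵐ[μ] g

/-- An `𝔽`-consistent nonlinear expectation `(E, Dom(E))` on the horizon `[0, T]`,
together with its conditional versions at stopping times, satisfying the domain
axioms (D1)-(D3), (A1)-(A4) at stopping times, and hypotheses (H0)-(H5). -/
structure FExp [m : MeasurableSpace Ω] (μ : Measure Ω) (T : ℝ) (ℱ : Filtration ℝ m) where
  /-- the domain `Dom(E)` -/
  Dom : Set (Ω → ℝ)
  /-- `cond τ ξ` is the conditional expectation `E_τ[ξ]` at the stopping time `τ` -/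
  cond : (Ω → ℝ) → (Ω → ℝ) → Ω → ℝ
  /-- `E0 ξ` is the (deterministic) value `E[ξ] = E_0[ξ]` -/
  E0 : (Ω → ℝ) → ℝ
  zero_mem : (fun _ => (0 : ℝ)) ∈ Dom
  one_mem : (fun _ => (1 : ℝ)) ∈ Dom
  /-- (H4): all constants belong to the domain -/
  const_mem : ∀ c : ℝ, (fun _ => c) ∈ Dom
  add_mem : ∀ {ξ η : Ω → ℝ}, ξ ∈ Dom → η ∈ Dom → ξ + η ∈ Dom
  indicator_mem : ∀ {ξ : Ω → ℝ}, ξ ∈ Dom → ∀ {A : Set Ω}, MeasurableSet A →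
    A.indicator ξ ∈ Dom
  sandwich_mem : ∀ {ξ η : Ω → ℝ}, η ∈ Dom → (∀ᵐ ω ∂μ, 0 ≤ ξ ω ∧ ξ ω ≤ η ω) → ξ ∈ Dom
  cond_mem : ∀ {τ ξ : Ω → ℝ}, Stop0 ℱ T τ → ξ ∈ Dom → 0 ≤ᵐ[μ] ξ → cond τ ξ ∈ Dom
  cond_nonneg : ∀ {τ ξ : Ω → ℝ}, Stop0 ℱ T τ → ξ ∈ Dom → 0 ≤ᵐ[μ] ξ → 0 ≤ᵐ[μ] cond τ ξ
  /-- `E_τ[ξ]` is `F_τ`-measurable -/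
  cond_adapted : ∀ {τ ξ : Ω → ℝ} (hτ : Stop0 ℱ T τ), ξ ∈ Dom → 0 ≤ᵐ[μ] ξ →
    Measurable[hτ.1.measurableSpace] (cond τ ξ)
  /-- monotonicity -/
  mono : ∀ {τ ξ η : Ω → ℝ}, Stop0 ℱ T τ → ξ ∈ Dom → 0 ≤ᵐ[μ] ξ → η ∈ Dom → 0 ≤ᵐ[μ] η →
    ξ ≤ᵐ[μ] η → cond τ ξ ≤ᵐ[μ] cond τ η
  /-- strict monotonicity -/
  strict_mono : ∀ {τ ξ η : Ω → ℝ}, Stop0 ℱ T τ → ξ ∈ Dom → 0 ≤ᵐ[μ] ξ → η ∈ Dom →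
    0 ≤ᵐ[μ] η → ξ ≤ᵐ[μ] η → cond τ ξ =ᵐ[μ] cond τ η → ξ =ᵐ[μ] η
  /-- time consistency -/
  time_consistent : ∀ {σ τ ξ : Ω → ℝ}, Stop0 ℱ T σ → Stop0 ℱ T τ → (∀ ω, σ ω ≤ τ ω) →
    ξ ∈ Dom → 0 ≤ᵐ[μ] ξ → cond σ (cond τ ξ) =ᵐ[μ] cond σ ξ
  /-- zero-one law -/
  zero_one : ∀ {τ ξ : Ω → ℝ} (hτ : Stop0 ℱ T τ), ξ ∈ Dom → 0 ≤ᵐ[μ] ξ →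
    ∀ {A : Set Ω}, MeasurableSet[hτ.1.measurableSpace] A →
    cond τ (A.indicator ξ) =ᵐ[μ] A.indicator (cond τ ξ)
  /-- translation invariance -/
  translation : ∀ {τ ξ η : Ω → ℝ} (hτ : Stop0 ℱ T τ), ξ ∈ Dom → 0 ≤ᵐ[μ] ξ → η ∈ Dom →
    0 ≤ᵐ[μ] η → Measurable[hτ.1.measurableSpace] η → cond τ (ξ + η) =ᵐ[μ] cond τ ξ + η
  /-- `F_0` is trivial: `E_0[ξ]` is the constant `E0 ξ` -/
  E0_eq : ∀ {ξ : Ω → ℝ}, ξ ∈ Dom → 0 ≤ᵐ[μ] ξ →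
    cond (fun _ => (0 : ℝ)) ξ =ᵐ[μ] fun _ => E0 ξ
  /-- the process `t ↦ E_t[ξ]` has RCLL paths -/
  rcll_paths : ∀ {ξ : Ω → ℝ}, ξ ∈ Dom → 0 ≤ᵐ[μ] ξ →
    ∀ᵐ ω ∂μ, RCLLOn (fun t => cond (fun _ => t) ξ ω) T
  /-- (H0) -/
  h0 : ∀ {A : Set Ω}, MeasurableSet A → 0 < μ A →
    Tendsto (fun n : ℕ => E0 (A.indicator fun _ => (n : ℝ))) atTop atTop
  /-- (H1) -/
  h1 : ∀ {ξ : Ω → ℝ}, ξ ∈ Dom → 0 ≤ᵐ[μ] ξ → ∀ {A : ℕ → Set Ω},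
    (∀ n, MeasurableSet (A n)) → Monotone A → (∀ᵐ ω ∂μ, ω ∈ ⋃ n, A n) →
    Tendsto (fun n => E0 ((A n).indicator ξ)) atTop (nhds (E0 ξ))
  /-- (H2) -/
  h2 : ∀ {ξ η : Ω → ℝ}, ξ ∈ Dom → 0 ≤ᵐ[μ] ξ → η ∈ Dom → 0 ≤ᵐ[μ] η →
    ∀ {A : ℕ → Set Ω}, (∀ n, MeasurableSet (A n)) → Antitone A →
    (∀ᵐ ω ∂μ, ω ∉ ⋂ n, A n) →
    Tendsto (fun n => E0 (ξ + (A n).indicator η)) atTop (nhds (E0 ξ))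
  /-- (H5) -/
  h5 : ∀ {ξ : ℕ → Ω → ℝ} {ζ : Ω → ℝ}, (∀ n, ξ n ∈ Dom) → (∀ n, 0 ≤ᵐ[μ] ξ n) →
    (∀ᵐ ω ∂μ, Tendsto (fun n => ξ n ω) atTop (nhds (ζ ω))) →
    (∃ C : ℝ, ∃ᶠ n in atTop, E0 (ξ n) ≤ C) → ζ ∈ Dom

variable [m : MeasurableSpace Ω] {μ : Measure Ω} {T : ℝ} {ℱ : Filtration ℝ m}

/-- (H6): sub-additivity. -/
def FExp.Subadditive (𝔈 : FExp μ T ℱ) : Prop :=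
  ∀ ⦃τ ξ η : Ω → ℝ⦄, Stop0 ℱ T τ → ξ ∈ 𝔈.Dom → 0 ≤ᵐ[μ] ξ → η ∈ 𝔈.Dom → 0 ≤ᵐ[μ] η →
    𝔈.cond τ (ξ + η) ≤ᵐ[μ] 𝔈.cond τ ξ + 𝔈.cond τ η

/-- (H7): positive homogeneity. -/
def FExp.PosHom (𝔈 : FExp μ T ℱ) : Prop :=
  ∀ ⦃τ ξ : Ω → ℝ⦄ (l : ℝ), 0 ≤ l → Stop0 ℱ T τ → ξ ∈ 𝔈.Dom → 0 ≤ᵐ[μ] ξ →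
    𝔈.cond τ (fun ω => l * ξ ω) =ᵐ[μ] fun ω => l * 𝔈.cond τ ξ ω

/-- Admissible family of rewards indexed by stopping times. -/
def Admissible (𝔈 : FExp μ T ℱ) (X : (Ω → ℝ) → Ω → ℝ) : Prop :=
  (∀ τ : Ω → ℝ, ∀ hτ : Stop0 ℱ T τ, X τ ∈ 𝔈.Dom ∧ 0 ≤ᵐ[μ] X τ ∧
      Measurable[hτ.1.measurableSpace] (X τ)) ∧
    ∀ τ σ : Ω → ℝ, Stop0 ℱ T τ → Stop0 ℱ T σ →
      ∀ᵐ ω ∂μ, τ ω = σ ω → X τ ω = X σ ω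

/-- `sup_{τ ∈ S_0} E[X(τ)] < ∞`. -/
def BddRewardE0 (𝔈 : FExp μ T ℱ) (X : (Ω → ℝ) → Ω → ℝ) : Prop :=
  ∃ C : ℝ, ∀ τ : Ω → ℝ, Stop0 ℱ T τ → 𝔈.E0 (X τ) ≤ C

/-- `v` is the value function family of the single stopping problem for the reward `X`:
`v(S) = esssup_{τ ∈ S_S} E_S[X(τ)]`. -/
def IsValueFam (𝔈 : FExp μ T ℱ) (X v : (Ω → ℝ) → Ω → ℝ) : Prop :=
  ∀ S : Ω → ℝ, Stop0 ℱ T S →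
    IsEssSupFam μ {g | ∃ τ : Ω → ℝ, IsStopIn ℱ T S τ ∧ g = 𝔈.cond S (X τ)} (v S)

/-- An `E`-supermartingale system. -/
def SupermartSys (𝔈 : FExp μ T ℱ) (h : (Ω → ℝ) → Ω → ℝ) : Prop :=
  (∀ τ : Ω → ℝ, ∀ hτ : Stop0 ℱ T τ, h τ ∈ 𝔈.Dom ∧ 0 ≤ᵐ[μ] h τ ∧
      Measurable[hτ.1.measurableSpace] (h τ)) ∧
    ∀ τ σ : Ω → ℝ, Stop0 ℱ T τ → Stop0 ℱ T σ → (∀ᵐ ω ∂μ, τ ω ≤ σ ω) →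
      𝔈.cond τ (h σ) ≤ᵐ[μ] h τ

/-- Right-continuity along stopping times in `E`-expectation (RCE). -/
def RCE (𝔈 : FExp μ T ℱ) (X : (Ω → ℝ) → Ω → ℝ) : Prop :=
  ∀ τ : Ω → ℝ, Stop0 ℱ T τ → ∀ τs : ℕ → Ω → ℝ, (∀ n, Stop0 ℱ T (τs n)) →
    (∀ᵐ ω ∂μ, Antitone (fun n => τs n ω) ∧
      Tendsto (fun n => τs n ω) atTop (nhds (τ ω))) →
    Tendsto (fun n => 𝔈.E0 (X (τs n))) atTop (nhds (𝔈.E0 (X τ)))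

/-- Left-continuity along stopping times in `E`-expectation (LCE). -/
def LCE (𝔈 : FExp μ T ℱ) (X : (Ω → ℝ) → Ω → ℝ) : Prop :=
  ∀ τ : Ω → ℝ, Stop0 ℱ T τ → ∀ τs : ℕ → Ω → ℝ, (∀ n, Stop0 ℱ T (τs n)) →
    (∀ᵐ ω ∂μ, Monotone (fun n => τs n ω) ∧
      Tendsto (fun n => τs n ω) atTop (nhds (τ ω))) →
    Tendsto (fun n => 𝔈.E0 (X (τs n))) atTop (nhds (𝔈.E0 (X τ)))

/-- Continuity along stopping times in `E`-expectation (CE). -/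
def CE (𝔈 : FExp μ T ℱ) (X : (Ω → ℝ) → Ω → ℝ) : Prop :=
  RCE 𝔈 X ∧ LCE 𝔈 X

/-- Right-continuity along stopping times (RC): a.s. pointwise convergence. -/
def RCfam (𝔈 : FExp μ T ℱ) (X : (Ω → ℝ) → Ω → ℝ) : Prop :=
  ∀ τ : Ω → ℝ, Stop0 ℱ T τ → ∀ τs : ℕ → Ω → ℝ, (∀ n, Stop0 ℱ T (τs n)) →
    (∀ᵐ ω ∂μ, Antitone (fun n => τs n ω) ∧
      Tendsto (fun n => τs n ω) atTop (nhds (τ ω))) →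
    ∀ᵐ ω ∂μ, Tendsto (fun n => X (τs n) ω) atTop (nhds (X τ ω))

/-- Biadmissible family of rewards indexed by pairs of stopping times. -/
def Biadmissible (𝔈 : FExp μ T ℱ) (X : (Ω → ℝ) → (Ω → ℝ) → Ω → ℝ) : Prop :=
  (∀ τ σ : Ω → ℝ, ∀ hτ : Stop0 ℱ T τ, ∀ hσ : Stop0 ℱ T σ,
      X τ σ ∈ 𝔈.Dom ∧ 0 ≤ᵐ[μ] X τ σ ∧
      Measurable[(hτ.1.max hσ.1).measurableSpace] (X τ σ)) ∧
    ∀ τ σ τ' σ' : Ω → ℝ, Stop0 ℱ T τ → Stop0 ℱ T σ → Stop0 ℱ T τ' → Stop0 ℱ T σ' →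
      ∀ᵐ ω ∂μ, τ ω = τ' ω → σ ω = σ' ω → X τ σ ω = X τ' σ' ω

/-- `sup_{τ,σ ∈ S_0} E[X(τ,σ)] < ∞`. -/
def BddReward2E0 (𝔈 : FExp μ T ℱ) (X : (Ω → ℝ) → (Ω → ℝ) → Ω → ℝ) : Prop :=
  ∃ C : ℝ, ∀ τ σ : Ω → ℝ, Stop0 ℱ T τ → Stop0 ℱ T σ → 𝔈.E0 (X τ σ) ≤ C

/-- `v` is the value function family of the double stopping problem:
`v(S) = esssup_{τ₁,τ₂ ∈ S_S} E_S[X(τ₁,τ₂)]`. -/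
def IsValueFam2 (𝔈 : FExp μ T ℱ) (X : (Ω → ℝ) → (Ω → ℝ) → Ω → ℝ)
    (v : (Ω → ℝ) → Ω → ℝ) : Prop :=
  ∀ S : Ω → ℝ, Stop0 ℱ T S →
    IsEssSupFam μ
      {g | ∃ τ₁ τ₂ : Ω → ℝ, IsStopIn ℱ T S τ₁ ∧ IsStopIn ℱ T S τ₂ ∧
        g = 𝔈.cond S (X τ₁ τ₂)} (v S)

/-- `u₁(θ) = esssup_{τ₁ ∈ S_θ} E_θ[X(τ₁, θ)]`. -/
def IsU1 (𝔈 : FExp μ T ℱ) (X : (Ω → ℝ) → (Ω → ℝ) → Ω → ℝ) (u₁ : (Ω → ℝ) → Ω → ℝ) : Prop :=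
  ∀ θ : Ω → ℝ, Stop0 ℱ T θ →
    IsEssSupFam μ {g | ∃ τ : Ω → ℝ, IsStopIn ℱ T θ τ ∧ g = 𝔈.cond θ (X τ θ)} (u₁ θ)

/-- `u₂(θ) = esssup_{τ₂ ∈ S_θ} E_θ[X(θ, τ₂)]`. -/
def IsU2 (𝔈 : FExp μ T ℱ) (X : (Ω → ℝ) → (Ω → ℝ) → Ω → ℝ) (u₂ : (Ω → ℝ) → Ω → ℝ) : Prop :=
  ∀ θ : Ω → ℝ, Stop0 ℱ T θ →
    IsEssSupFam μ {g | ∃ τ : Ω → ℝ, IsStopIn ℱ T θ τ ∧ g = 𝔈.cond θ (X θ τ)} (u₂ θ)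

/-- Uniform right-continuity of a biadmissible family along stopping times in
`ℰ`-expectation (URCℰ). -/
def URCE2 (ℰ : FExp μ T ℱ) (X : (Ω → ℝ) → (Ω → ℝ) → Ω → ℝ) : Prop :=
  ∀ σ : Ω → ℝ, Stop0 ℱ T σ → ∀ σs : ℕ → Ω → ℝ, (∀ n, Stop0 ℱ T (σs n)) →
    (∀ᵐ ω ∂μ, Antitone (fun n => σs n ω) ∧
      Tendsto (fun n => σs n ω) atTop (nhds (σ ω))) →
    ∀ ε : ℝ, 0 < ε → ∃ N : ℕ, ∀ n ≥ N, ∀ τ : Ω → ℝ, Stop0 ℱ T τ →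
      ℰ.E0 (fun ω => |X τ σ ω - X τ (σs n) ω|) ≤ ε ∧
      ℰ.E0 (fun ω => |X σ τ ω - X (σs n) τ ω|) ≤ ε

/-- Uniform left-continuity of a biadmissible family along stopping times in
`ℰ`-expectation (ULCℰ). -/
def ULCE2 (ℰ : FExp μ T ℱ) (X : (Ω → ℝ) → (Ω → ℝ) → Ω → ℝ) : Prop :=
  ∀ σ : Ω → ℝ, Stop0 ℱ T σ → ∀ σs : ℕ → Ω → ℝ, (∀ n, Stop0 ℱ T (σs n)) →
    (∀ᵐ ω ∂μ, Monotone (fun n => σs n ω) ∧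
      Tendsto (fun n => σs n ω) atTop (nhds (σ ω))) →
    ∀ ε : ℝ, 0 < ε → ∃ N : ℕ, ∀ n ≥ N, ∀ τ : Ω → ℝ, Stop0 ℱ T τ →
      ℰ.E0 (fun ω => |X τ σ ω - X τ (σs n) ω|) ≤ ε ∧
      ℰ.E0 (fun ω => |X σ τ ω - X (σs n) τ ω|) ≤ ε

/-- Uniform continuity (UCℰ) of a biadmissible family. -/
def UCE2 (ℰ : FExp μ T ℱ) (X : (Ω → ℝ) → (Ω → ℝ) → Ω → ℝ) : Prop :=
  URCE2 ℰ X ∧ ULCE2 ℰ X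

/-- `(E, Dom(E))` is dominated by `(Ẽ, Dom(Ẽ))`. -/
def Dominated (𝔈 𝔉 : FExp μ T ℱ) : Prop :=
  𝔈.Dom ⊆ 𝔉.Dom ∧
    ∀ τ : Ω → ℝ, Stop0 ℱ T τ → ∀ ξ η : Ω → ℝ, ξ ∈ 𝔈.Dom → η ∈ 𝔈.Dom →
      ∀ᵐ ω ∂μ, 𝔈.cond τ (ξ + η) ω - 𝔈.cond τ η ω ≤ 𝔉.cond τ ξ ω

/-- The filtration contains all `μ`-null sets (part of the usual conditions). -/
def CompleteFiltration (μ : Measure Ω) (ℱ : Filtration ℝ m) : Prop :=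
  ∀ s : Set Ω, μ s = 0 → ∀ t : ℝ, MeasurableSet[ℱ t] s

/-- The filtration is right-continuous (part of the usual conditions). -/
def RightContinuousFiltration (ℱ : Filtration ℝ m) : Prop :=
  ∀ t : ℝ, (ℱ t : MeasurableSpace Ω) = ⨅ u ∈ Set.Ioi t, ℱ u

/-- A `d`-tuple of stopping times, all in `S_s`. -/
def StopVec (ℱ : Filtration ℝ m) (T : ℝ) (s : Ω → ℝ) {d : ℕ} (τ : Fin d → Ω → ℝ) : Prop :=
  ∀ i, IsStopIn ℱ T s (τ i)

/-- A `d`-admissible family of rewards. -/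
def DAdmissible (𝔈 : FExp μ T ℱ) {d : ℕ} (X : (Fin d → Ω → ℝ) → Ω → ℝ) : Prop :=
  (∀ τ : Fin d → Ω → ℝ, StopVec ℱ T (fun _ => (0 : ℝ)) τ →
      X τ ∈ 𝔈.Dom ∧ 0 ≤ᵐ[μ] X τ ∧
      ∀ h : IsStoppingTime ℱ fun ω => (((⨆ i, τ i ω : ℝ)) : WithTop ℝ),
        Measurable[h.measurableSpace] (X τ)) ∧
    ∀ τ σ : Fin d → Ω → ℝ, StopVec ℱ T (fun _ => (0 : ℝ)) τ →
      StopVec ℱ T (fun _ => (0 : ℝ)) σ →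
      ∀ᵐ ω ∂μ, (∀ i, τ i ω = σ i ω) → X τ ω = X σ ω

/-- `sup_{τ ∈ S_0^d} E[X(τ)] < ∞`. -/
def BddRewardDE0 (𝔈 : FExp μ T ℱ) {d : ℕ} (X : (Fin d → Ω → ℝ) → Ω → ℝ) : Prop :=
  ∃ C : ℝ, ∀ τ : Fin d → Ω → ℝ, StopVec ℱ T (fun _ => (0 : ℝ)) τ → 𝔈.E0 (X τ) ≤ C

/-- `v` is the value function family of the `d`-stopping problem:
`v(S) = esssup_{τ ∈ S_S^d} E_S[X(τ)]`. -/
def IsValueFamD (𝔈 : FExp μ T ℱ) {d : ℕ} (X : (Fin d → Ω → ℝ) → Ω → ℝ)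
    (v : (Ω → ℝ) → Ω → ℝ) : Prop :=
  ∀ S : Ω → ℝ, Stop0 ℱ T S →
    IsEssSupFam μ
      {g | ∃ τ : Fin d → Ω → ℝ, StopVec ℱ T S τ ∧ g = 𝔈.cond S (X τ)} (v S)

/-- `u^{(i)}(θ) = esssup_{τ ∈ S_θ^{d-1}} E_θ[X^{(i)}(τ, θ)]`, where `X^{(i)}(τ, θ)`
inserts `θ` in the `i`-th slot. -/
def IsUi (𝔈 : FExp μ T ℱ) {d : ℕ} (X : (Fin (d + 1) → Ω → ℝ) → Ω → ℝ)
    (ui : Fin (d + 1) → (Ω → ℝ) → Ω → ℝ) : Prop :=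
  ∀ i : Fin (d + 1), ∀ θ : Ω → ℝ, Stop0 ℱ T θ →
    IsEssSupFam μ
      {g | ∃ τ : Fin d → Ω → ℝ, StopVec ℱ T θ τ ∧ g = 𝔈.cond θ (X (i.insertNth θ τ))}
      (ui i θ)

/-- Uniform continuity (UCE) of a `d`-admissible family along monotone sequences of
stopping times. -/
def UCED (𝔈 : FExp μ T ℱ) {d : ℕ} (X : (Fin (d + 1) → Ω → ℝ) → Ω → ℝ) : Prop :=
  ∀ i : Fin (d + 1), ∀ S : Ω → ℝ, Stop0 ℱ T S → ∀ Ss : ℕ → Ω → ℝ,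
    (∀ n, Stop0 ℱ T (Ss n)) →
    ((∀ᵐ ω ∂μ, Monotone fun n => Ss n ω) ∨ (∀ᵐ ω ∂μ, Antitone fun n => Ss n ω)) →
    (∀ᵐ ω ∂μ, Tendsto (fun n => Ss n ω) atTop (nhds (S ω))) →
    ∀ ε : ℝ, 0 < ε → ∃ N : ℕ, ∀ n ≥ N, ∀ θ : Fin d → Ω → ℝ,
      StopVec ℱ T (fun _ => (0 : ℝ)) θ →
      𝔈.E0 (fun ω => |X (i.insertNth (Ss n) θ) ω - X (i.insertNth S θ) ω|) ≤ ε


/-! ### Auxiliary infrastructure for the proof -/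

section Aux

variable [IsProbabilityMeasure μ]

lemma aux_ae_neBot : (MeasureTheory.ae μ).NeBot :=
  MeasureTheory.ae_neBot.mpr (IsProbabilityMeasure.ne_zero μ)

lemma const_ae_le {a b : ℝ} (h : (fun _ : Ω => a) ≤ᵐ[μ] (fun _ => b)) : a ≤ b := by
  have := aux_ae_neBot (μ := μ)
  obtain ⟨ω, hω⟩ := h.exists
  exact hω

lemma const_ae_eq {a b : ℝ} (h : (fun _ : Ω => a) =ᵐ[μ] (fun _ => b)) : a = b := by
  have := aux_ae_neBot (μ := μ)
  obtain ⟨ω, hω⟩ := h.exists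
  exact hω

end Aux

section StopAux

lemma isStoppingTime_coe_iff {τ : Ω → ℝ} :
    IsStoppingTime ℱ (fun ω => (τ ω : WithTop ℝ)) ↔ ∀ t : ℝ, MeasurableSet[ℱ t] {ω | τ ω ≤ t} := by
  simp only [IsStoppingTime, WithTop.coe_le_coe]

lemma mset_coe_le {τ : Ω → ℝ} {hτ : IsStoppingTime ℱ (fun ω => (τ ω : WithTop ℝ))} {s : Set Ω}
    (hs : MeasurableSet[hτ.measurableSpace] s) (t : ℝ) :
    MeasurableSet[ℱ t] (s ∩ {ω | τ ω ≤ t}) := by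
  have h := ((IsStoppingTime.measurableSet _ _).1 hs).2 t
  simpa only [WithTop.coe_le_coe] using h

lemma mset_coe_mk {τ : Ω → ℝ} (hτ : IsStoppingTime ℱ (fun ω => (τ ω : WithTop ℝ))) {s : Set Ω}
    (h : ∀ t : ℝ, MeasurableSet[ℱ t] (s ∩ {ω | τ ω ≤ t})) : MeasurableSet[hτ.measurableSpace] s := by
  refine (IsStoppingTime.measurableSet _ _).2 ⟨?_, fun t => ?_⟩
  · have hs : s = ⋃ n : ℕ, s ∩ {ω | τ ω ≤ n} := by
      ext ω
      simp only [Set.mem_iUnion, Set.mem_inter_iff, Set.mem_setOf_eq]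
      exact ⟨fun h => ⟨(exists_nat_ge (τ ω)).choose, h, (exists_nat_ge (τ ω)).choose_spec⟩,
        fun ⟨_, h, _⟩ => h⟩
    rw [hs]
    exact MeasurableSet.iUnion fun n => le_iSup (fun t => (ℱ t : MeasurableSpace Ω)) (n : ℝ) _ (h n)
  · simpa only [WithTop.coe_le_coe] using h t

lemma isStoppingTime_min' {ρ₁ ρ₂ : Ω → ℝ} (h1 : IsStoppingTime ℱ (fun ω => (ρ₁ ω : WithTop ℝ)))
    (h2 : IsStoppingTime ℱ (fun ω => (ρ₂ ω : WithTop ℝ))) :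
    IsStoppingTime ℱ (fun ω => ((min (ρ₁ ω) (ρ₂ ω) : ℝ) : WithTop ℝ)) := by
  rw [isStoppingTime_coe_iff]
  intro t
  simp only [min_le_iff, Set.setOf_or]
  exact (isStoppingTime_coe_iff.1 h1 t).union (isStoppingTime_coe_iff.1 h2 t)

lemma isStoppingTime_max' {ρ₁ ρ₂ : Ω → ℝ} (h1 : IsStoppingTime ℱ (fun ω => (ρ₁ ω : WithTop ℝ)))
    (h2 : IsStoppingTime ℱ (fun ω => (ρ₂ ω : WithTop ℝ))) :
    IsStoppingTime ℱ (fun ω => ((max (ρ₁ ω) (ρ₂ ω) : ℝ) : WithTop ℝ)) := by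
  rw [isStoppingTime_coe_iff]
  intro t
  simp only [max_le_iff, Set.setOf_and]
  exact (isStoppingTime_coe_iff.1 h1 t).inter (isStoppingTime_coe_iff.1 h2 t)

lemma measurableSpace_congr' {τ τ' : Ω → WithTop ℝ} (hτ : IsStoppingTime ℱ (fun ω => (τ ω : WithTop ℝ)))
    (hτ' : IsStoppingTime ℱ (fun ω => (τ' ω : WithTop ℝ))) (h : τ = τ') : hτ.measurableSpace = hτ'.measurableSpace := by
  subst h; rfl

lemma stop0_const {c : ℝ} (hc : 0 ≤ c) (hcT : c ≤ T) : Stop0 ℱ T (fun _ : Ω => c) :=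
  ⟨isStoppingTime_const ℱ c, fun _ => hc, fun _ => hcT⟩

lemma IsStopIn.stop0 {S τ : Ω → ℝ} (hS : Stop0 ℱ T S) (hτ : IsStopIn ℱ T S τ) :
    Stop0 ℱ T τ :=
  ⟨hτ.1, fun ω => le_trans (hS.2.1 ω) (hτ.2.1 ω), hτ.2.2⟩

lemma IsStopIn.refl' {S : Ω → ℝ} (hS : Stop0 ℱ T S) : IsStopIn ℱ T S S :=
  ⟨hS.1, fun _ => le_rfl, hS.2.2⟩

lemma Stop0.measurable {τ : Ω → ℝ} (hτ : Stop0 ℱ T τ) : Measurable τ :=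
  measurable_of_Iic fun t => ℱ.le t _ (isStoppingTime_coe_iff.1 hτ.1 t)

lemma Stop0.max {τ σ : Ω → ℝ} (hτ : Stop0 ℱ T τ) (hσ : Stop0 ℱ T σ) :
    Stop0 ℱ T (fun ω => max (τ ω) (σ ω)) :=
  ⟨isStoppingTime_max' hτ.1 hσ.1, fun ω => le_trans (hτ.2.1 ω) (le_max_left _ _),
    fun ω => max_le (hτ.2.2 ω) (hσ.2.2 ω)⟩

lemma Stop0.min {τ σ : Ω → ℝ} (hτ : Stop0 ℱ T τ) (hσ : Stop0 ℱ T σ) :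
    Stop0 ℱ T (fun ω => min (τ ω) (σ ω)) :=
  ⟨isStoppingTime_min' hτ.1 hσ.1, fun ω => le_min (hτ.2.1 ω) (hσ.2.1 ω),
    fun ω => le_trans (min_le_left _ _) (hτ.2.2 ω)⟩

open Classical in
/-- Pasting two functions along a set, provided the relevant measurability conditions hold. -/
lemma isStoppingTime_ite {σ τ : Ω → ℝ} (B : Set Ω)
    (h1 : ∀ t, MeasurableSet[ℱ t] (B ∩ {ω | σ ω ≤ t}))
    (h2 : ∀ t, MeasurableSet[ℱ t] (Bᶜ ∩ {ω | τ ω ≤ t})) :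
    IsStoppingTime ℱ (fun ω => ((if ω ∈ B then σ ω else τ ω : ℝ) : WithTop ℝ)) := by
  rw [isStoppingTime_coe_iff]
  intro t
  have hset : {ω | (if ω ∈ B then σ ω else τ ω) ≤ t}
      = (B ∩ {ω | σ ω ≤ t}) ∪ (Bᶜ ∩ {ω | τ ω ≤ t}) := by
    ext ω; by_cases h : ω ∈ B <;> simp [h]
  rw [hset]
  exact (h1 t).union (h2 t)

lemma inter_le_mem_self {σ : Ω → ℝ} (hσ : IsStoppingTime ℱ (fun ω => (σ ω : WithTop ℝ))) {B : Set Ω}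
    (hB : MeasurableSet[hσ.measurableSpace] B) (t : ℝ) :
    MeasurableSet[ℱ t] (B ∩ {ω | σ ω ≤ t}) := mset_coe_le hB t

lemma inter_le_mem_of_le {ρ σ : Ω → ℝ} (hρ : IsStoppingTime ℱ (fun ω => (ρ ω : WithTop ℝ))) (hσ : IsStoppingTime ℱ (fun ω => (σ ω : WithTop ℝ)))
    {B : Set Ω} (hB : MeasurableSet[hρ.measurableSpace] B) (hBle : ∀ ω ∈ B, ρ ω ≤ σ ω) (t : ℝ) :
    MeasurableSet[ℱ t] (B ∩ {ω | σ ω ≤ t}) := by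
  have hset : B ∩ {ω | σ ω ≤ t} = (B ∩ {ω | ρ ω ≤ t}) ∩ {ω | σ ω ≤ t} := by
    ext ω
    constructor
    · rintro ⟨hω, h⟩; exact ⟨⟨hω, le_trans (hBle ω hω) h⟩, h⟩
    · rintro ⟨⟨hω, _⟩, h⟩; exact ⟨hω, h⟩
  rw [hset]
  exact (mset_coe_le hB t).inter (isStoppingTime_coe_iff.1 hσ t)

lemma inter_le_mem_constT {ρ : Ω → ℝ} (hρ : IsStoppingTime ℱ (fun ω => (ρ ω : WithTop ℝ))) {B : Set Ω}
    (hB : MeasurableSet[hρ.measurableSpace] B) (hρT : ∀ ω, ρ ω ≤ T) (t : ℝ) :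
    MeasurableSet[ℱ t] (B ∩ {ω | (fun _ : Ω => T) ω ≤ t}) := by
  by_cases h : T ≤ t
  · have hset : B ∩ {ω | (fun _ : Ω => T) ω ≤ t} = B := by ext ω; simp [h]
    rw [hset]
    exact ℱ.mono h _ (hρ.measurableSpace_le_of_le_const (fun ω => WithTop.coe_le_coe.2 (hρT ω)) _ hB)
  · have hset : B ∩ {ω | (fun _ : Ω => T) ω ≤ t} = ∅ := by ext ω; simp [h]
    rw [hset]; exact @MeasurableSet.empty _ (ℱ t)

/-- A countable infimum of stopping times is a stopping time when the filtration is
right-continuous. -/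
lemma isStoppingTime_iInf (hrcf : RightContinuousFiltration ℱ) {τ : ℕ → Ω → ℝ}
    (hτ : ∀ n, IsStoppingTime ℱ (fun ω => (τ n ω : WithTop ℝ))) (hbd : ∀ n ω, 0 ≤ τ n ω) :
    IsStoppingTime ℱ (fun ω => ((⨅ n, τ n ω : ℝ) : WithTop ℝ)) := by
  rw [isStoppingTime_coe_iff]
  intro t
  have hbdd : ∀ ω, BddBelow (Set.range fun n => τ n ω) :=
    fun ω => ⟨0, by rintro x ⟨n, rfl⟩; exact hbd n ω⟩
  have key : ∀ u, t < u → MeasurableSet[ℱ u] {ω | (⨅ n, τ n ω) ≤ t} := by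
    intro u hu
    have hset : {ω | (⨅ n, τ n ω) ≤ t}
        = ⋂ k : ℕ, ⋃ n, {ω | τ n ω < t + (u - t) / (k + 1)} := by
      ext ω
      simp only [Set.mem_setOf_eq, Set.mem_iInter, Set.mem_iUnion]
      constructor
      · intro h k
        have hpos : (0 : ℝ) < (u - t) / (k + 1) := div_pos (by linarith) (by positivity)
        have hlt : (⨅ n, τ n ω) < t + (u - t) / (k + 1) := lt_of_le_of_lt h (by linarith)
        exact exists_lt_of_ciInf_lt hlt
      · intro h
        by_contra hc
        push_neg at hc
        obtain ⟨k, hk⟩ := exists_nat_gt ((u - t) / ((⨅ n, τ n ω) - t))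
        obtain ⟨n, hn⟩ := h k
        have h1 : (⨅ n, τ n ω) ≤ τ n ω := ciInf_le (hbdd ω) n
        have h3 : (0 : ℝ) < (⨅ n, τ n ω) - t := by linarith
        have h6 : ((u - t) / ((⨅ n, τ n ω) - t)) < (k : ℝ) + 1 := by
          push_cast; linarith
        have h2 : (u - t) / (k + 1) < (⨅ n, τ n ω) - t := by
          rw [div_lt_iff₀ (by positivity)]
          calc u - t = (u - t) / ((⨅ n, τ n ω) - t) * ((⨅ n, τ n ω) - t) := by
                field_simp
            _ < ((k : ℝ) + 1) * ((⨅ n, τ n ω) - t) := mul_lt_mul_of_pos_right h6 h3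
            _ = ((⨅ n, τ n ω) - t) * ((k : ℝ) + 1) := mul_comm _ _
        linarith
    rw [hset]
    have hmem : ∀ (k n : ℕ), MeasurableSet[ℱ u] {ω | τ n ω < t + (u - t) / (k + 1)} := by
      intro k n
      have hle : t + (u - t) / (k + 1) ≤ u := by
        have h7 : (u - t) / ((k : ℝ) + 1) ≤ u - t := by
          apply div_le_self (by linarith) (by push_cast; linarith [Nat.cast_nonneg (α := ℝ) k])
        linarith
      have hlt := (hτ n).measurableSet_lt (t + (u - t) / (k + 1))
      simp only [WithTop.coe_lt_coe] at hlt
      exact ℱ.mono hle _ hlt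
    exact MeasurableSet.iInter fun k => MeasurableSet.iUnion fun n => hmem k n
  rw [hrcf t]
  rw [MeasurableSpace.measurableSet_iInf]
  intro u
  rw [MeasurableSpace.measurableSet_iInf]
  intro hu
  exact key u hu

/-- A countable (uniformly bounded) supremum of stopping times is a stopping time. -/
lemma isStoppingTime_iSup {τ : ℕ → Ω → ℝ} (hτ : ∀ n, IsStoppingTime ℱ (fun ω => (τ n ω : WithTop ℝ)))
    (hbd : ∀ n ω, τ n ω ≤ T) : IsStoppingTime ℱ (fun ω => ((⨆ n, τ n ω : ℝ) : WithTop ℝ)) := by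
  rw [isStoppingTime_coe_iff]
  intro t
  have hbdd : ∀ ω, BddAbove (Set.range fun n => τ n ω) :=
    fun ω => ⟨T, by rintro x ⟨n, rfl⟩; exact hbd n ω⟩
  have hset : {ω | (⨆ n, τ n ω) ≤ t} = ⋂ n, {ω | τ n ω ≤ t} := by
    ext ω
    simp only [Set.mem_setOf_eq, Set.mem_iInter]
    exact ciSup_le_iff (hbdd ω)
  rw [hset]
  exact MeasurableSet.iInter fun n => isStoppingTime_coe_iff.1 (hτ n) t

/-- With a complete filtration, an a.e. modification of a stopping time is a stopping time. -/
lemma isStoppingTime_congr_ae (hcf : CompleteFiltration μ ℱ) {τ τ' : Ω → ℝ}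
    (hτ : IsStoppingTime ℱ (fun ω => (τ ω : WithTop ℝ))) (h : τ' =ᵐ[μ] τ) : IsStoppingTime ℱ (fun ω => (τ' ω : WithTop ℝ)) := by
  rw [isStoppingTime_coe_iff]
  intro t
  have hnull : μ {ω | ¬ τ' ω = τ ω} = 0 := by
    rw [← MeasureTheory.ae_iff]; exact h
  set A := {ω | τ' ω ≤ t} \ {ω | τ ω ≤ t} with hA
  set B := {ω | τ ω ≤ t} \ {ω | τ' ω ≤ t} with hB
  have hAnull : μ A = 0 := by
    apply measure_mono_null _ hnull
    intro ω hω
    simp only [hA, Set.mem_diff, Set.mem_setOf_eq] at hω ⊢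
    intro he; rw [he] at hω; exact hω.2 hω.1
  have hBnull : μ B = 0 := by
    apply measure_mono_null _ hnull
    intro ω hω
    simp only [hB, Set.mem_diff, Set.mem_setOf_eq] at hω ⊢
    intro he; rw [he] at hω; exact hω.2 hω.1
  have hset : {ω | τ' ω ≤ t} = (({ω | τ ω ≤ t} ∪ A) \ B) := by
    ext ω
    simp only [hA, hB, Set.mem_diff, Set.mem_union, Set.mem_setOf_eq]
    by_cases h1 : τ' ω ≤ t <;> by_cases h2 : τ ω ≤ t <;> simp [h1, h2]
  rw [hset]
  exact ((isStoppingTime_coe_iff.1 hτ t).union (hcf A hAnull t)).diff (hcf B hBnull t)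

end StopAux

open Classical

section MeasAux

/-- A measurable pointwise-limit version of a sequence of functions. -/
noncomputable def limsupVer (ξ : ℕ → Ω → ℝ) : Ω → ℝ :=
  fun ω => Filter.limsup (fun n => ξ n ω) Filter.atTop

lemma limsupVer_measurable {mm : MeasurableSpace Ω} {ξ : ℕ → Ω → ℝ}
    (h : ∀ n, Measurable[mm] (ξ n)) : Measurable[mm] (limsupVer ξ) := by
  exact Measurable.limsup h

lemma limsupVer_ae_eq {μ : Measure Ω} [m0 : MeasurableSpace Ω] {ξ : ℕ → Ω → ℝ} {ζ : Ω → ℝ}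
    (h : ∀ᵐ ω ∂μ, Filter.Tendsto (fun n => ξ n ω) Filter.atTop (nhds (ζ ω))) :
    limsupVer ξ =ᵐ[μ] ζ := by
  filter_upwards [h] with ω hω
  exact hω.limsup_eq

lemma measurable_indicator_of_inter {m1 m2 : MeasurableSpace Ω} {E : Set Ω} {f : Ω → ℝ}
    (hf : Measurable[m1] f) (hE : MeasurableSet[m2] E)
    (h : ∀ s : Set Ω, MeasurableSet[m1] s → MeasurableSet[m2] (s ∩ E)) :
    Measurable[m2] (E.indicator f) := by
  intro B hB
  have hset : E.indicator f ⁻¹' B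
      = ((f ⁻¹' B) ∩ E) ∪ (Eᶜ ∩ (if (0 : ℝ) ∈ B then Set.univ else ∅)) := by
    ext ω
    by_cases hω : ω ∈ E <;> by_cases h0 : (0 : ℝ) ∈ B <;>
      simp [Set.indicator_apply, hω, h0]
  rw [hset]
  refine MeasurableSet.union (h _ (hf hB)) (MeasurableSet.inter hE.compl ?_)
  split_ifs
  · exact @MeasurableSet.univ _ m2
  · exact @MeasurableSet.empty _ m2

end MeasAux

section StopMeasAux

lemma measurableSet_lt_stop {σ ν : Ω → ℝ} (hσ : IsStoppingTime ℱ (fun ω => (σ ω : WithTop ℝ))) (hν : IsStoppingTime ℱ (fun ω => (ν ω : WithTop ℝ))) :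
    MeasurableSet[hν.measurableSpace] {ω | σ ω < ν ω} := by
  have h := MeasureTheory.IsStoppingTime.measurableSet_le_stopping_time hν hσ
  simp only [WithTop.coe_le_coe] at h
  have : {ω | σ ω < ν ω} = {ω | ν ω ≤ σ ω}ᶜ := by
    ext ω; simp [not_le]
  rw [this]
  exact h.compl

lemma inter_lt_mem {σ ν : Ω → ℝ} (hσ : IsStoppingTime ℱ (fun ω => (σ ω : WithTop ℝ))) (hν : IsStoppingTime ℱ (fun ω => (ν ω : WithTop ℝ)))
    {C : Set Ω} (hC : MeasurableSet[hσ.measurableSpace] C) :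
    MeasurableSet[hν.measurableSpace] (C ∩ {ω | σ ω < ν ω}) := by
  refine mset_coe_mk hν fun t => ?_
  have hlt := measurableSet_lt_stop hσ hν
  have hset : C ∩ {ω | σ ω < ν ω} ∩ {ω | ν ω ≤ t}
      = (C ∩ {ω | σ ω ≤ t}) ∩ ({ω | σ ω < ν ω} ∩ {ω | ν ω ≤ t}) := by
    ext ω
    simp only [Set.mem_inter_iff, Set.mem_setOf_eq]
    constructor
    · rintro ⟨⟨hc, hlt'⟩, hle⟩
      exact ⟨⟨hc, le_trans (le_of_lt hlt') hle⟩, hlt', hle⟩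
    · rintro ⟨⟨hc, _⟩, hlt', hle⟩
      exact ⟨⟨hc, hlt'⟩, hle⟩
  rw [hset]
  exact (mset_coe_le hC t).inter (mset_coe_le hlt t)

lemma measurableSet_eq_min {ρ₁ ρ₂ : Ω → ℝ} (h1 : IsStoppingTime ℱ (fun ω => (ρ₁ ω : WithTop ℝ))) (h2 : IsStoppingTime ℱ (fun ω => (ρ₂ ω : WithTop ℝ))) :
    MeasurableSet[(isStoppingTime_min' h1 h2).measurableSpace] {ω | ρ₁ ω = ρ₂ ω} := by
  rw [← measurableSpace_congr' (h1.min h2) (isStoppingTime_min' h1 h2)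
    (funext fun ω => (WithTop.coe_min (ρ₁ ω) (ρ₂ ω)).symm)]
  rw [MeasureTheory.IsStoppingTime.measurableSet_min_iff h1 h2]
  constructor
  · have h := MeasureTheory.IsStoppingTime.measurableSet_eq_stopping_time h1 h2
    simp only [WithTop.coe_eq_coe] at h
    exact h
  · have h := MeasureTheory.IsStoppingTime.measurableSet_eq_stopping_time h2 h1
    simp only [WithTop.coe_eq_coe] at h
    have : {ω | ρ₁ ω = ρ₂ ω} = {ω | ρ₂ ω = ρ₁ ω} := by ext ω; simp [eq_comm]
    rw [this]
    exact h

lemma inter_eq_mem {ρ₁ ρ₂ : Ω → ℝ} (h1 : IsStoppingTime ℱ (fun ω => (ρ₁ ω : WithTop ℝ))) (h2 : IsStoppingTime ℱ (fun ω => (ρ₂ ω : WithTop ℝ)))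
    {C : Set Ω} (hC : MeasurableSet[h1.measurableSpace] C) :
    MeasurableSet[(isStoppingTime_min' h1 h2).measurableSpace] (C ∩ {ω | ρ₁ ω = ρ₂ ω}) := by
  refine mset_coe_mk _ fun t => ?_
  have hE : MeasurableSet[(isStoppingTime_min' h1 h2).measurableSpace] {ω | ρ₁ ω = ρ₂ ω} :=
    measurableSet_eq_min h1 h2
  have hset : C ∩ {ω | ρ₁ ω = ρ₂ ω} ∩ {ω | min (ρ₁ ω) (ρ₂ ω) ≤ t}
      = (C ∩ {ω | ρ₁ ω ≤ t}) ∩ ({ω | ρ₁ ω = ρ₂ ω} ∩ {ω | min (ρ₁ ω) (ρ₂ ω) ≤ t}) := by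
    ext ω
    simp only [Set.mem_inter_iff, Set.mem_setOf_eq]
    constructor
    · rintro ⟨⟨hc, he⟩, hle⟩
      refine ⟨⟨hc, ?_⟩, he, hle⟩
      rw [he] at hle ⊢
      simpa using hle
    · rintro ⟨⟨hc, _⟩, he, hle⟩
      exact ⟨⟨hc, he⟩, hle⟩
  rw [hset]
  exact (mset_coe_le hC t).inter (mset_coe_le hE t)

end StopMeasAux

/-- All the data and hypotheses of the main theorem, bundled. -/
structure Ctx [mm : MeasurableSpace Ω] (μ : Measure Ω) (T : ℝ) (ℱ : Filtration ℝ mm) where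
  E : FExp μ T ℱ
  hsub : E.Subadditive
  hpos : E.PosHom
  X : (Ω → ℝ) → Ω → ℝ
  hXadm : Admissible E X
  hXce : CE E X
  Cb : ℝ
  hCb : ∀ τ : Ω → ℝ, Stop0 ℱ T τ → E.E0 (X τ) ≤ Cb
  θ : Ω → ℝ
  hθ : Stop0 ℱ T θ
  Y : (Ω → ℝ) → Ω → ℝ
  hYdef : ∀ τ ω, Y τ ω = if θ ω ≤ τ ω then X τ ω + 1 else 0
  v' : (Ω → ℝ) → Ω → ℝ
  hv' : ∀ S : Ω → ℝ, Stop0 ℱ T S → IsEssSupFam μ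
    {g | ∃ τ : Ω → ℝ, IsStopIn ℱ T S τ ∧ g = fun ω => E.cond S (Y τ) ω - 1} (v' S)
  hT : 0 < T
  hcf : CompleteFiltration μ ℱ
  hrcf : RightContinuousFiltration ℱ

namespace Ctx

lemma stop0_T (C : Ctx μ T ℱ) : Stop0 ℱ T (fun _ : Ω => T) := stop0_const C.hT.le le_rfl

lemma stop0_zero (C : Ctx μ T ℱ) : Stop0 ℱ T (fun _ : Ω => (0 : ℝ)) :=
  stop0_const le_rfl C.hT.le

variable [IsProbabilityMeasure μ] (C : Ctx μ T ℱ)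

/-- Membership in `Dom⁺(E)`. -/
def InD (ξ : Ω → ℝ) : Prop := ξ ∈ C.E.Dom ∧ 0 ≤ᵐ[μ] ξ

/-- The shifted value function `W S = v'(S) + 1`. -/
def W (S : Ω → ℝ) : Ω → ℝ := fun ω => C.v' S ω + 1

lemma inD_const {c : ℝ} (hc : 0 ≤ c) : C.InD (fun _ => c) :=
  ⟨C.E.const_mem c, Filter.Eventually.of_forall fun _ => hc⟩

lemma inD_zero : C.InD (fun _ => (0 : ℝ)) := C.inD_const le_rfl

lemma inD_add {ξ η : Ω → ℝ} (hξ : C.InD ξ) (hη : C.InD η) : C.InD (ξ + η) :=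
  ⟨C.E.add_mem hξ.1 hη.1, by filter_upwards [hξ.2, hη.2] with ω h1 h2; exact add_nonneg h1 h2⟩

lemma inD_indicator {ξ : Ω → ℝ} (hξ : C.InD ξ) {A : Set Ω} (hA : MeasurableSet A) :
    C.InD (A.indicator ξ) :=
  ⟨C.E.indicator_mem hξ.1 hA, by
    filter_upwards [hξ.2] with ω h1
    by_cases hω : ω ∈ A
    · simpa [Set.indicator_apply, hω] using h1
    · simp [Set.indicator_apply, hω]⟩

lemma inD_cond {τ ξ : Ω → ℝ} (hτ : Stop0 ℱ T τ) (hξ : C.InD ξ) : C.InD (C.E.cond τ ξ) :=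
  ⟨C.E.cond_mem hτ hξ.1 hξ.2, C.E.cond_nonneg hτ hξ.1 hξ.2⟩

lemma inD_sandwich {ξ η : Ω → ℝ} (hη : η ∈ C.E.Dom)
    (h : ∀ᵐ ω ∂μ, 0 ≤ ξ ω ∧ ξ ω ≤ η ω) : C.InD ξ :=
  ⟨C.E.sandwich_mem hη h, by filter_upwards [h] with ω hω; exact hω.1⟩

/-- `Dom⁺` is stable under a.e. modification (uses (H5)). -/
lemma inD_congr {ξ ξ' : Ω → ℝ} (hξ : C.InD ξ) (h : ξ' =ᵐ[μ] ξ) (h0 : 0 ≤ᵐ[μ] ξ') :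
    C.InD ξ' := by
  refine ⟨C.E.h5 (ξ := fun _ => ξ) (fun _ => hξ.1) (fun _ => hξ.2) ?_
    ⟨C.E.E0 ξ, Filter.Frequently.of_forall fun _ => le_rfl⟩, h0⟩
  filter_upwards [h] with ω hω
  rw [hω]
  exact tendsto_const_nhds

lemma cond_mono {τ ξ η : Ω → ℝ} (hτ : Stop0 ℱ T τ) (hξ : C.InD ξ) (hη : C.InD η)
    (h : ξ ≤ᵐ[μ] η) : C.E.cond τ ξ ≤ᵐ[μ] C.E.cond τ η :=
  C.E.mono hτ hξ.1 hξ.2 hη.1 hη.2 h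

lemma cond_congr {τ ξ η : Ω → ℝ} (hτ : Stop0 ℱ T τ) (hξ : C.InD ξ) (hη : C.InD η)
    (h : ξ =ᵐ[μ] η) : C.E.cond τ ξ =ᵐ[μ] C.E.cond τ η := by
  have h1 := C.cond_mono hτ hξ hη h.le
  have h2 := C.cond_mono hτ hη hξ h.symm.le
  exact h1.antisymm h2

/-- `E_τ[0] = 0`. -/
lemma cond_zero {τ : Ω → ℝ} (hτ : Stop0 ℱ T τ) :
    C.E.cond τ (fun _ => (0 : ℝ)) =ᵐ[μ] fun _ => (0 : ℝ) := by
  have h := C.E.zero_one hτ (C.E.zero_mem) (Filter.Eventually.of_forall fun _ => le_rfl)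
    (A := ∅) (@MeasurableSet.empty _ hτ.1.measurableSpace)
  have h1 : (∅ : Set Ω).indicator (fun _ => (0 : ℝ)) = fun _ => (0 : ℝ) := by
    ext ω; simp
  rw [h1] at h
  refine h.trans ?_
  filter_upwards with ω
  simp

/-- `E_τ[η] = η` for `F_τ`-measurable `η`. -/
lemma cond_self {τ η : Ω → ℝ} (hτ : Stop0 ℱ T τ) (hη : C.InD η)
    (hmeas : Measurable[hτ.1.measurableSpace] η) : C.E.cond τ η =ᵐ[μ] η := by
  have h := C.E.translation hτ C.E.zero_mem (Filter.Eventually.of_forall fun _ => le_rfl)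
    hη.1 hη.2 hmeas
  have h1 : (fun _ : Ω => (0 : ℝ)) + η = η := by ext ω; simp
  rw [h1] at h
  refine h.trans ?_
  have h2 := C.cond_zero hτ
  filter_upwards [h2] with ω hω
  simp only [Pi.add_apply, hω]
  simp

/-- `E_0[ξ]` determines `E0` as a constant. -/
lemma E0_congr {ξ η : Ω → ℝ} (hξ : C.InD ξ) (hη : C.InD η) (h : ξ =ᵐ[μ] η) :
    C.E.E0 ξ = C.E.E0 η := by
  have h1 := (C.E.E0_eq hξ.1 hξ.2).symm.trans
    ((C.cond_congr C.stop0_zero hξ hη h).trans (C.E.E0_eq hη.1 hη.2))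
  exact const_ae_eq h1

lemma E0_mono {ξ η : Ω → ℝ} (hξ : C.InD ξ) (hη : C.InD η) (h : ξ ≤ᵐ[μ] η) :
    C.E.E0 ξ ≤ C.E.E0 η := by
  have h1 := C.cond_mono C.stop0_zero hξ hη h
  refine const_ae_le (μ := μ) ?_
  calc (fun _ : Ω => C.E.E0 ξ) =ᵐ[μ] C.E.cond (fun _ => (0:ℝ)) ξ := (C.E.E0_eq hξ.1 hξ.2).symm
    _ ≤ᵐ[μ] C.E.cond (fun _ => (0:ℝ)) η := h1
    _ =ᵐ[μ] fun _ => C.E.E0 η := C.E.E0_eq hη.1 hη.2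

lemma E0_zero : C.E.E0 (fun _ => (0 : ℝ)) = 0 := by
  have h := (C.E.E0_eq C.E.zero_mem (Filter.Eventually.of_forall fun _ => le_rfl)).symm.trans
    (C.cond_zero C.stop0_zero)
  exact (const_ae_eq h.symm).symm

/-- Strict monotonicity at time `0`: equal `E0` plus a.e. `≤` gives a.e. `=`. -/
lemma ae_eq_of_E0_eq {ξ η : Ω → ℝ} (hξ : C.InD ξ) (hη : C.InD η) (hle : ξ ≤ᵐ[μ] η)
    (h : C.E.E0 ξ = C.E.E0 η) : ξ =ᵐ[μ] η := by
  refine C.E.strict_mono C.stop0_zero hξ.1 hξ.2 hη.1 hη.2 hle ?_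
  calc C.E.cond (fun _ => (0:ℝ)) ξ =ᵐ[μ] fun _ => C.E.E0 ξ := C.E.E0_eq hξ.1 hξ.2
    _ =ᵐ[μ] fun _ => C.E.E0 η := by rw [h]
    _ =ᵐ[μ] C.E.cond (fun _ => (0:ℝ)) η := (C.E.E0_eq hη.1 hη.2).symm

/-- `E0 (ξ + c) = E0 ξ + c` for constants `c ≥ 0`. -/
lemma E0_add_const {ξ : Ω → ℝ} (hξ : C.InD ξ) {c : ℝ} (hc : 0 ≤ c) :
    C.E.E0 (fun ω => ξ ω + c) = C.E.E0 ξ + c := by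
  have hmeas : Measurable[(C.stop0_zero).1.measurableSpace] (fun _ : Ω => c) :=
    @measurable_const ℝ Ω _ (C.stop0_zero).1.measurableSpace c
  have h := C.E.translation C.stop0_zero hξ.1 hξ.2 (C.E.const_mem c)
    (Filter.Eventually.of_forall fun _ => hc) hmeas
  have h1 : ξ + (fun _ => c) = fun ω => ξ ω + c := by ext ω; simp
  rw [h1] at h
  have h2 : C.InD (fun ω => ξ ω + c) := by
    have := C.inD_add hξ (C.inD_const hc)
    rwa [h1] at this
  have h3 := (C.E.E0_eq h2.1 h2.2).symm.trans h
  have h4 : (C.E.cond (fun _ => (0:ℝ)) ξ) + (fun _ => c) =ᵐ[μ] fun _ => C.E.E0 ξ + c := by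
    filter_upwards [C.E.E0_eq hξ.1 hξ.2] with ω hω
    simp only [Pi.add_apply, hω]
  exact const_ae_eq (h3.trans h4)

/-- `E0` is sub-additive. -/
lemma E0_add_le {ξ η : Ω → ℝ} (hξ : C.InD ξ) (hη : C.InD η) :
    C.E.E0 (ξ + η) ≤ C.E.E0 ξ + C.E.E0 η := by
  have h := C.hsub C.stop0_zero hξ.1 hξ.2 hη.1 hη.2
  have hadd := C.inD_add hξ hη
  refine const_ae_le (μ := μ) ?_
  calc (fun _ : Ω => C.E.E0 (ξ + η)) =ᵐ[μ] C.E.cond (fun _ => (0:ℝ)) (ξ + η) :=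
      (C.E.E0_eq hadd.1 hadd.2).symm
    _ ≤ᵐ[μ] C.E.cond (fun _ => (0:ℝ)) ξ + C.E.cond (fun _ => (0:ℝ)) η := h
    _ =ᵐ[μ] fun _ => C.E.E0 ξ + C.E.E0 η := by
      filter_upwards [C.E.E0_eq hξ.1 hξ.2, C.E.E0_eq hη.1 hη.2] with ω h1 h2
      simp only [Pi.add_apply, h1, h2]

/-- `E0` is positively homogeneous. -/
lemma inD_nat_smul {ξ : Ω → ℝ} (hξ : C.InD ξ) (n : ℕ) : C.InD (fun ω => (n : ℝ) * ξ ω) := by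
  induction n with
  | zero =>
      have h0 : (fun ω : Ω => ((0 : ℕ) : ℝ) * ξ ω) = fun _ => (0 : ℝ) := by ext ω; simp
      rw [h0]; exact C.inD_zero
  | succ k ih =>
      have h1 : (fun ω : Ω => ((k + 1 : ℕ) : ℝ) * ξ ω)
          = (fun ω => (k : ℝ) * ξ ω) + ξ := by
        ext ω; simp only [Pi.add_apply]; push_cast; ring
      rw [h1]; exact C.inD_add ih hξ

lemma inD_smul {ξ : Ω → ℝ} (hξ : C.InD ξ) {l : ℝ} (hl : 0 ≤ l) :
    C.InD (fun ω => l * ξ ω) := by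
  obtain ⟨n, hn⟩ := exists_nat_ge l
  refine C.inD_sandwich (C.inD_nat_smul hξ n).1 ?_
  filter_upwards [hξ.2] with ω h0
  exact ⟨mul_nonneg hl h0, mul_le_mul_of_nonneg_right hn h0⟩

lemma E0_smul {ξ : Ω → ℝ} (hξ : C.InD ξ) {l : ℝ} (hl : 0 ≤ l) :
    C.E.E0 (fun ω => l * ξ ω) = l * C.E.E0 ξ := by
  have h := C.hpos l hl C.stop0_zero hξ.1 hξ.2
  have hmem : C.InD (fun ω => l * ξ ω) := C.inD_smul hξ hl
  have h1 := (C.E.E0_eq hmem.1 hmem.2).symm.trans h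
  have h2 : (fun ω => l * C.E.cond (fun _ => (0:ℝ)) ξ ω) =ᵐ[μ] fun _ => l * C.E.E0 ξ := by
    filter_upwards [C.E.E0_eq hξ.1 hξ.2] with ω hω
    rw [hω]
  exact const_ae_eq (h1.trans h2)

/-- `E0 ∘ E_τ = E0`. -/
lemma E0_cond {τ ξ : Ω → ℝ} (hτ : Stop0 ℱ T τ) (hξ : C.InD ξ) :
    C.E.E0 (C.E.cond τ ξ) = C.E.E0 ξ := by
  have h := C.E.time_consistent C.stop0_zero hτ hτ.2.1 hξ.1 hξ.2
  have hc := C.inD_cond hτ hξ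
  have h1 := (C.E.E0_eq hc.1 hc.2).symm.trans (h.trans (C.E.E0_eq hξ.1 hξ.2))
  exact const_ae_eq h1

end Ctx

namespace Ctx

variable [IsProbabilityMeasure μ] (C : Ctx μ T ℱ)

lemma E0_indicator_tendsto {ζ : Ω → ℝ} (hζ : C.InD ζ) {A : ℕ → Set Ω}
    (hA : ∀ n, MeasurableSet (A n)) (hAnti : Antitone A) (hnull : ∀ᵐ ω ∂μ, ω ∉ ⋂ n, A n) :
    Filter.Tendsto (fun n => C.E.E0 ((A n).indicator ζ)) Filter.atTop (nhds 0) := by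
  have h := C.E.h2 C.E.zero_mem (Filter.Eventually.of_forall fun _ => le_rfl)
    hζ.1 hζ.2 hA hAnti hnull
  have heq : ∀ n, (fun _ : Ω => (0 : ℝ)) + (A n).indicator ζ = (A n).indicator ζ := by
    intro n; ext ω; simp
  rw [C.E0_zero] at h
  simpa only [heq] using h

/-- Monotone convergence for `E0`. -/
lemma E0_MCT {ξ : ℕ → Ω → ℝ} {ζ : Ω → ℝ} (hmem : ∀ n, C.InD (ξ n))
    (hmeas : ∀ n, Measurable (ξ n)) (hζ : C.InD ζ)
    (hconv : ∀ᵐ ω ∂μ, Monotone (fun n => ξ n ω) ∧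
      Filter.Tendsto (fun n => ξ n ω) Filter.atTop (nhds (ζ ω))) :
    Filter.Tendsto (fun n => C.E.E0 (ξ n)) Filter.atTop (nhds (C.E.E0 ζ)) := by
  have hle : ∀ n, ξ n ≤ᵐ[μ] ζ := by
    intro n
    filter_upwards [hconv] with ω hω
    exact hω.1.ge_of_tendsto hω.2 n
  have hlemono : ∀ ⦃n k : ℕ⦄, n ≤ k → ξ n ≤ᵐ[μ] ξ k := by
    intro n k hnk
    filter_upwards [hconv] with ω hω
    exact hω.1 hnk
  have hEmono : Monotone fun n => C.E.E0 (ξ n) :=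
    fun n k hnk => C.E0_mono (hmem n) (hmem k) (hlemono hnk)
  have hEbd : ∀ n, C.E.E0 (ξ n) ≤ C.E.E0 ζ := fun n => C.E0_mono (hmem n) hζ (hle n)
  have hbdd : BddAbove (Set.range fun n => C.E.E0 (ξ n)) :=
    ⟨C.E.E0 ζ, by rintro x ⟨n, rfl⟩; exact hEbd n⟩
  have htend : Filter.Tendsto (fun n => C.E.E0 (ξ n)) Filter.atTop
      (nhds (⨆ n, C.E.E0 (ξ n))) := tendsto_atTop_ciSup hEmono hbdd
  have hsup_le : (⨆ n, C.E.E0 (ξ n)) ≤ C.E.E0 ζ := ciSup_le hEbd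
  -- measurable version of ζ
  set ζ' := limsupVer ξ with hζ'def
  have hζ'meas : Measurable ζ' := limsupVer_measurable hmeas
  have hζ'ae : ζ' =ᵐ[μ] ζ := limsupVer_ae_eq (by filter_upwards [hconv] with ω hω; exact hω.2)
  have hζ' : C.InD ζ' := C.inD_congr hζ hζ'ae (by
    filter_upwards [hζ'ae, hζ.2] with ω h1 h2; rw [h1]; exact h2)
  have hEζ : C.E.E0 ζ' = C.E.E0 ζ := C.E0_congr hζ' hζ hζ'ae
  have key : ∀ δ : ℝ, 0 < δ → C.E.E0 ζ ≤ (⨆ n, C.E.E0 (ξ n)) + 2 * δ := by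
    intro δ hδ
    set B : ℕ → Set Ω := fun j => ⋃ i ∈ Finset.range (j + 1), {ω | ζ' ω - δ ≤ ξ i ω}
      with hBdef
    have hBmeas : ∀ j, MeasurableSet (B j) := by
      intro j
      exact MeasurableSet.biUnion (Finset.range (j+1)).countable_toSet
        fun i _ => measurableSet_le (hζ'meas.sub measurable_const) (hmeas i)
    have hBmono : Monotone B := by
      intro j k hjk ω hω
      simp only [hBdef, Set.mem_iUnion, Finset.mem_range] at hω ⊢
      obtain ⟨i, hi, hω⟩ := hω
      exact ⟨i, lt_of_lt_of_le hi (by omega), hω⟩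
    have hBc_anti : Antitone fun j => (B j)ᶜ := fun j k hjk => Set.compl_subset_compl.2 (hBmono hjk)
    have hBc_null : ∀ᵐ ω ∂μ, ω ∉ ⋂ j, (B j)ᶜ := by
      filter_upwards [hconv, hζ'ae] with ω hω hζω
      intro hmem'
      simp only [Set.mem_iInter, Set.mem_compl_iff, hBdef, Set.mem_iUnion, Finset.mem_range,
        Set.mem_setOf_eq, not_exists] at hmem'
      have : ∀ᶠ n in Filter.atTop, ζ ω - δ < ξ n ω :=
        hω.2.eventually_const_lt (by linarith)
      obtain ⟨j, hj⟩ := this.exists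
      exact hmem' j j (by omega) (by rw [hζω]; linarith)
    have hind : ∀ j, C.InD ((B j)ᶜ.indicator ζ') := fun j => C.inD_indicator hζ' (hBmeas j).compl
    have hptle : ∀ j, ζ' ≤ᵐ[μ] fun ω => (ξ j ω + ((B j)ᶜ.indicator ζ') ω) + δ := by
      intro j
      filter_upwards [hconv, hζ'ae, hζ'.2, (hmem j).2] with ω hω hζω hζ'0 hξ0
      by_cases hωB : ω ∈ B j
      · simp only [hBdef, Set.mem_iUnion, Finset.mem_range, Set.mem_setOf_eq] at hωB
        obtain ⟨i, hi, hile⟩ := hωB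
        have h2 : ξ i ω ≤ ξ j ω := hω.1 (by omega)
        have h3 : ((B j)ᶜ.indicator ζ') ω = 0 := by
          apply Set.indicator_of_notMem
          simp only [Set.mem_compl_iff, not_not, hBdef, Set.mem_iUnion, Finset.mem_range,
            Set.mem_setOf_eq]
          exact ⟨i, hi, hile⟩
        rw [h3]
        linarith
      · have h3 : ((B j)ᶜ.indicator ζ') ω = ζ' ω :=
          Set.indicator_of_mem (Set.mem_compl hωB) ζ'
        have hξ0' : (0 : ℝ) ≤ ξ j ω := hξ0
        rw [h3]
        linarith
    have hstep : ∀ j, C.E.E0 ζ ≤ C.E.E0 (ξ j) + C.E.E0 ((B j)ᶜ.indicator ζ') + δ := by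
      intro j
      have hψ : C.InD (ξ j + (B j)ᶜ.indicator ζ') := C.inD_add (hmem j) (hind j)
      have h1 : C.E.E0 ζ' ≤ C.E.E0 (fun ω => (ξ j ω + ((B j)ᶜ.indicator ζ') ω) + δ) := by
        refine C.E0_mono hζ' ?_ (hptle j)
        have := C.inD_add hψ (C.inD_const hδ.le)
        have heq : (ξ j + (B j)ᶜ.indicator ζ') + (fun _ => δ)
            = fun ω => (ξ j ω + ((B j)ᶜ.indicator ζ') ω) + δ := by
          ext ω; simp
        rwa [heq] at this
      have h2 : C.E.E0 (fun ω => (ξ j ω + ((B j)ᶜ.indicator ζ') ω) + δ)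
          = C.E.E0 (ξ j + (B j)ᶜ.indicator ζ') + δ := C.E0_add_const hψ hδ.le
      have h3 : C.E.E0 (ξ j + (B j)ᶜ.indicator ζ') ≤ C.E.E0 (ξ j)
          + C.E.E0 ((B j)ᶜ.indicator ζ') := C.E0_add_le (hmem j) (hind j)
      rw [← hEζ]
      linarith
    have htend0 := C.E0_indicator_tendsto hζ' (fun j => (hBmeas j).compl) hBc_anti hBc_null
    have hev : ∀ᶠ j in Filter.atTop, C.E.E0 ((B j)ᶜ.indicator ζ') < δ :=
      htend0.eventually_lt_const hδ
    obtain ⟨j, hj⟩ := hev.exists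
    have hsj := hstep j
    have hsupj : C.E.E0 (ξ j) ≤ ⨆ n, C.E.E0 (ξ n) := le_ciSup hbdd j
    linarith
  have hfin : C.E.E0 ζ = ⨆ n, C.E.E0 (ξ n) := by
    refine le_antisymm ?_ hsup_le
    by_contra hc
    push_neg at hc
    have := key ((C.E.E0 ζ - ⨆ n, C.E.E0 (ξ n)) / 3) (by linarith)
    linarith
  rw [← hfin] at htend
  exact htend


end Ctx

namespace Ctx

variable [IsProbabilityMeasure μ] (C : Ctx μ T ℱ)

/-- The unmodified shifted reward `X + 1`. -/
def XP (τ : Ω → ℝ) : Ω → ℝ := fun ω => C.X τ ω + 1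

lemma inD_X {τ : Ω → ℝ} (hτ : Stop0 ℱ T τ) : C.InD (C.X τ) :=
  ⟨(C.hXadm.1 τ hτ).1, (C.hXadm.1 τ hτ).2.1⟩

lemma inD_XP {τ : Ω → ℝ} (hτ : Stop0 ℱ T τ) : C.InD (C.XP τ) := by
  have h := C.inD_add (C.inD_X hτ) (C.inD_const (le_of_lt one_pos))
  exact h

lemma E0_XP {τ : Ω → ℝ} (hτ : Stop0 ℱ T τ) : C.E.E0 (C.XP τ) = C.E.E0 (C.X τ) + 1 :=
  C.E0_add_const (C.inD_X hτ) zero_le_one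

lemma Y_indicator (τ : Ω → ℝ) :
    C.Y τ = {ω | C.θ ω ≤ τ ω}.indicator (C.XP τ) := by
  ext ω
  rw [C.hYdef]
  by_cases h : C.θ ω ≤ τ ω <;> simp [Set.indicator_apply, h, XP]

lemma inD_Y {τ : Ω → ℝ} (hτ : Stop0 ℱ T τ) : C.InD (C.Y τ) := by
  rw [C.Y_indicator τ]
  exact C.inD_indicator (C.inD_XP hτ)
    (measurableSet_le C.hθ.measurable hτ.measurable)

lemma Y_measF {τ : Ω → ℝ} (hτ : Stop0 ℱ T τ) :
    Measurable[hτ.1.measurableSpace] (C.Y τ) := by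
  rw [C.Y_indicator τ]
  have hset : MeasurableSet[hτ.1.measurableSpace] {ω | C.θ ω ≤ τ ω} :=
    by
      have h := MeasureTheory.IsStoppingTime.measurableSet_stopping_time_le C.hθ.1 hτ.1
      simp only [WithTop.coe_le_coe] at h
      exact h
  have hXm : Measurable[hτ.1.measurableSpace] (C.XP τ) :=
    ((C.hXadm.1 τ hτ).2.2).add (@measurable_const ℝ Ω _ hτ.1.measurableSpace 1)
  exact hXm.indicator hset

lemma Y_congr_ptwise {τ σ : Ω → ℝ} (hτ : Stop0 ℱ T τ) (hσ : Stop0 ℱ T σ) :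
    ∀ᵐ ω ∂μ, τ ω = σ ω → C.Y τ ω = C.Y σ ω := by
  filter_upwards [C.hXadm.2 τ σ hτ hσ] with ω hX he
  rw [C.hYdef, C.hYdef, he, hX he]

lemma Y_congr_ae {τ σ : Ω → ℝ} (hτ : Stop0 ℱ T τ) (hσ : Stop0 ℱ T σ)
    (h : τ =ᵐ[μ] σ) : C.Y τ =ᵐ[μ] C.Y σ := by
  filter_upwards [C.Y_congr_ptwise hτ hσ, h] with ω h1 h2
  exact h1 h2

lemma Y_le_XP {τ : Ω → ℝ} (hτ : Stop0 ℱ T τ) : C.Y τ ≤ᵐ[μ] C.XP τ := by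
  filter_upwards [(C.hXadm.1 τ hτ).2.1] with ω h0
  rw [C.hYdef]
  by_cases h : C.θ ω ≤ τ ω
  · simp [h, XP]
  · simp only [h, if_false, XP]
    have : (0 : ℝ) ≤ C.X τ ω := h0
    linarith

lemma Y_eq_of_ge {τ : Ω → ℝ} (h : C.θ ≤ᵐ[μ] τ) : C.Y τ =ᵐ[μ] C.XP τ := by
  filter_upwards [h] with ω hω
  rw [C.hYdef]
  simp only [XP]
  rw [if_pos hω]

lemma E0_Y_le_bound {τ : Ω → ℝ} (hτ : Stop0 ℱ T τ) : C.E.E0 (C.Y τ) ≤ C.Cb + 1 := by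
  have h1 : C.E.E0 (C.Y τ) ≤ C.E.E0 (C.XP τ) :=
    C.E0_mono (C.inD_Y hτ) (C.inD_XP hτ) (C.Y_le_XP hτ)
  rw [C.E0_XP hτ] at h1
  have := C.hCb τ hτ
  linarith

/-- The `Y`-family is RCE along sequences above `θ`. -/
lemma E0_Y_RCE {τ : Ω → ℝ} (hτ : Stop0 ℱ T τ) {τs : ℕ → Ω → ℝ} (hτs : ∀ n, Stop0 ℱ T (τs n))
    (hconv : ∀ᵐ ω ∂μ, Antitone (fun n => τs n ω) ∧
      Filter.Tendsto (fun n => τs n ω) Filter.atTop (nhds (τ ω)))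
    (hθs : ∀ n, C.θ ≤ᵐ[μ] τs n) :
    Filter.Tendsto (fun n => C.E.E0 (C.Y (τs n))) Filter.atTop (nhds (C.E.E0 (C.Y τ))) := by
  have hθτ : C.θ ≤ᵐ[μ] τ := by
    have hall : ∀ᵐ ω ∂μ, ∀ n, C.θ ω ≤ τs n ω :=
      MeasureTheory.ae_all_iff.mpr fun n => hθs n
    filter_upwards [hconv, hall] with ω h1 h2
    exact ge_of_tendsto h1.2 (Filter.Eventually.of_forall fun n => h2 n)
  have heq : ∀ n, C.E.E0 (C.Y (τs n)) = C.E.E0 (C.X (τs n)) + 1 := by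
    intro n
    rw [C.E0_congr (C.inD_Y (hτs n)) (C.inD_XP (hτs n)) (C.Y_eq_of_ge (hθs n)), C.E0_XP (hτs n)]
  have heqτ : C.E.E0 (C.Y τ) = C.E.E0 (C.X τ) + 1 := by
    rw [C.E0_congr (C.inD_Y hτ) (C.inD_XP hτ) (C.Y_eq_of_ge hθτ), C.E0_XP hτ]
  have hX := C.hXce.1 τ hτ τs hτs hconv
  have : (fun n => C.E.E0 (C.Y (τs n))) = fun n => C.E.E0 (C.X (τs n)) + 1 :=
    funext heq
  rw [this, heqτ]
  exact hX.add_const 1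

/-- The `Y`-family is LCE along sequences above `θ`. -/
lemma E0_Y_LCE {τ : Ω → ℝ} (hτ : Stop0 ℱ T τ) {τs : ℕ → Ω → ℝ} (hτs : ∀ n, Stop0 ℱ T (τs n))
    (hconv : ∀ᵐ ω ∂μ, Monotone (fun n => τs n ω) ∧
      Filter.Tendsto (fun n => τs n ω) Filter.atTop (nhds (τ ω)))
    (hθs : ∀ n, C.θ ≤ᵐ[μ] τs n) :
    Filter.Tendsto (fun n => C.E.E0 (C.Y (τs n))) Filter.atTop (nhds (C.E.E0 (C.Y τ))) := by
  have hθτ : C.θ ≤ᵐ[μ] τ := by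
    have hall : ∀ᵐ ω ∂μ, ∀ n, C.θ ω ≤ τs n ω :=
      MeasureTheory.ae_all_iff.mpr fun n => hθs n
    filter_upwards [hconv, hall] with ω h1 h2
    exact ge_of_tendsto h1.2 (Filter.Eventually.of_forall fun n =>
      le_trans (h2 0) (h1.1 (Nat.zero_le n)))
  have heq : ∀ n, C.E.E0 (C.Y (τs n)) = C.E.E0 (C.X (τs n)) + 1 := by
    intro n
    rw [C.E0_congr (C.inD_Y (hτs n)) (C.inD_XP (hτs n)) (C.Y_eq_of_ge (hθs n)), C.E0_XP (hτs n)]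
  have heqτ : C.E.E0 (C.Y τ) = C.E.E0 (C.X τ) + 1 := by
    rw [C.E0_congr (C.inD_Y hτ) (C.inD_XP hτ) (C.Y_eq_of_ge hθτ), C.E0_XP hτ]
  have hX := C.hXce.2 τ hτ τs hτs hconv
  have : (fun n => C.E.E0 (C.Y (τs n))) = fun n => C.E.E0 (C.X (τs n)) + 1 :=
    funext heq
  rw [this, heqτ]
  exact hX.add_const 1

end Ctx

namespace Ctx

variable [IsProbabilityMeasure μ] (C : Ctx μ T ℱ)

lemma cond_indicator {τ ξ : Ω → ℝ} (hτ : Stop0 ℱ T τ) (hξ : C.InD ξ) {A : Set Ω}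
    (hA : MeasurableSet[hτ.1.measurableSpace] A) :
    C.E.cond τ (A.indicator ξ) =ᵐ[μ] A.indicator (C.E.cond τ ξ) :=
  C.E.zero_one hτ hξ.1 hξ.2 hA

lemma cond_meas {τ ξ : Ω → ℝ} (hτ : Stop0 ℱ T τ) (hξ : C.InD ξ) :
    Measurable (C.E.cond τ ξ) :=
  (C.E.cond_adapted hτ hξ.1 hξ.2).mono hτ.1.measurableSpace_le le_rfl

/-- `E_τ` splits across an `F_τ`-measurable set. -/
lemma cond_split {τ ξ η : Ω → ℝ} (hτ : Stop0 ℱ T τ) (hξ : C.InD ξ) (hη : C.InD η) {A : Set Ω}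
    (hA : MeasurableSet[hτ.1.measurableSpace] A) :
    C.E.cond τ (A.indicator ξ + Aᶜ.indicator η)
      =ᵐ[μ] A.indicator (C.E.cond τ ξ) + Aᶜ.indicator (C.E.cond τ η) := by
  have hAm : MeasurableSet A := hτ.1.measurableSpace_le _ hA
  have hζ : C.InD (A.indicator ξ + Aᶜ.indicator η) :=
    C.inD_add (C.inD_indicator hξ hAm) (C.inD_indicator hη hAm.compl)
  have h1 := C.cond_indicator hτ hζ hA
  have h2 := C.cond_indicator hτ hζ hA.compl
  have e1 : A.indicator (A.indicator ξ + Aᶜ.indicator η) = A.indicator ξ := by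
    ext ω; by_cases h : ω ∈ A <;> simp [Set.indicator_apply, h]
  have e2 : Aᶜ.indicator (A.indicator ξ + Aᶜ.indicator η) = Aᶜ.indicator η := by
    ext ω; by_cases h : ω ∈ A <;> simp [Set.indicator_apply, h]
  rw [e1] at h1
  rw [e2] at h2
  have h3 := C.cond_indicator hτ hξ hA
  have h4 := C.cond_indicator hτ hη hA.compl
  filter_upwards [h1, h2, h3, h4] with ω k1 k2 k3 k4
  have hsplit : C.E.cond τ (A.indicator ξ + Aᶜ.indicator η) ω
      = A.indicator (C.E.cond τ (A.indicator ξ + Aᶜ.indicator η)) ω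
        + Aᶜ.indicator (C.E.cond τ (A.indicator ξ + Aᶜ.indicator η)) ω := by
    by_cases h : ω ∈ A <;> simp [Set.indicator_apply, h]
  rw [hsplit, ← k1, ← k2, k3, k4]
  rfl

/-- Members of the value family are dominated by `W`. -/
lemma le_W {S σ : Ω → ℝ} (hS : Stop0 ℱ T S) (hσ : IsStopIn ℱ T S σ) :
    C.E.cond S (C.Y σ) ≤ᵐ[μ] C.W S := by
  have h := (C.hv' S hS).1 (fun ω => C.E.cond S (C.Y σ) ω - 1) ⟨σ, hσ, rfl⟩
  filter_upwards [h] with ω hω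
  have hh : C.E.cond S (C.Y σ) ω - 1 ≤ C.v' S ω := hω
  have h2 : C.W S ω = C.v' S ω + 1 := rfl
  rw [h2]; linarith

/-- `W` is the least a.e. upper bound of the value family. -/
lemma W_le {S : Ω → ℝ} (hS : Stop0 ℱ T S) {h : Ω → ℝ}
    (hub : ∀ σ, IsStopIn ℱ T S σ → C.E.cond S (C.Y σ) ≤ᵐ[μ] h) :
    C.W S ≤ᵐ[μ] h := by
  have h2 := (C.hv' S hS).2 (fun ω => h ω - 1) ?_
  · filter_upwards [h2] with ω hω
    have hh : C.v' S ω ≤ h ω - 1 := hω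
    have h3 : C.W S ω = C.v' S ω + 1 := rfl
    rw [h3]; linarith
  · rintro g ⟨σ, hσ, rfl⟩
    filter_upwards [hub σ hσ] with ω hω
    have hh : C.E.cond S (C.Y σ) ω ≤ h ω := hω
    show C.E.cond S (C.Y σ) ω - 1 ≤ h ω - 1
    linarith

/-- Combination of two stopping times realizing the max of their conditional rewards. -/
lemma directed {S σ₁ σ₂ : Ω → ℝ} (hS : Stop0 ℱ T S) (h1 : IsStopIn ℱ T S σ₁)
    (h2 : IsStopIn ℱ T S σ₂) :
    ∃ σ₃ : Ω → ℝ, IsStopIn ℱ T S σ₃ ∧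
      C.E.cond S (C.Y σ₃) =ᵐ[μ]
        fun ω => max (C.E.cond S (C.Y σ₁) ω) (C.E.cond S (C.Y σ₂) ω) := by
  set A : Set Ω := {ω | C.E.cond S (C.Y σ₂) ω ≤ C.E.cond S (C.Y σ₁) ω} with hAdef
  have hY1 := C.inD_Y (h1.stop0 hS)
  have hY2 := C.inD_Y (h2.stop0 hS)
  have hAmeas : MeasurableSet[hS.1.measurableSpace] A := by
    exact measurableSet_le (C.E.cond_adapted hS hY2.1 hY2.2) (C.E.cond_adapted hS hY1.1 hY1.2)
  set σ₃ : Ω → ℝ := fun ω => if ω ∈ A then σ₁ ω else σ₂ ω with hσ₃def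
  have hstop : IsStopIn ℱ T S σ₃ := by
    refine ⟨isStoppingTime_ite A (fun t => ?_) (fun t => ?_), fun ω => ?_, fun ω => ?_⟩
    · exact inter_le_mem_of_le hS.1 h1.1 hAmeas (fun ω _ => h1.2.1 ω) t
    · exact inter_le_mem_of_le hS.1 h2.1 hAmeas.compl (fun ω _ => h2.2.1 ω) t
    · by_cases h : ω ∈ A
      · simpa only [hσ₃def, if_pos h] using h1.2.1 ω
      · simpa only [hσ₃def, if_neg h] using h2.2.1 ω
    · by_cases h : ω ∈ A
      · simpa only [hσ₃def, if_pos h] using h1.2.2 ω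
      · simpa only [hσ₃def, if_neg h] using h2.2.2 ω
  refine ⟨σ₃, hstop, ?_⟩
  have hY3 := C.inD_Y (hstop.stop0 hS)
  have hYeq : C.Y σ₃ =ᵐ[μ] A.indicator (C.Y σ₁) + Aᶜ.indicator (C.Y σ₂) := by
    filter_upwards [C.Y_congr_ptwise (hstop.stop0 hS) (h1.stop0 hS),
      C.Y_congr_ptwise (hstop.stop0 hS) (h2.stop0 hS)] with ω k1 k2
    by_cases h : ω ∈ A
    · have hc : ω ∉ Aᶜ := fun hc => hc h
      rw [Pi.add_apply, Set.indicator_of_mem h, Set.indicator_of_notMem hc, add_zero]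
      exact k1 (by simp only [hσ₃def, if_pos h])
    · have hc : ω ∈ Aᶜ := h
      rw [Pi.add_apply, Set.indicator_of_notMem h, Set.indicator_of_mem hc, zero_add]
      exact k2 (by simp only [hσ₃def, if_neg h])
  have hsum : C.InD (A.indicator (C.Y σ₁) + Aᶜ.indicator (C.Y σ₂)) := by
    have hAm : MeasurableSet A := hS.1.measurableSpace_le _ hAmeas
    exact C.inD_add (C.inD_indicator hY1 hAm) (C.inD_indicator hY2 hAm.compl)
  have hc := (C.cond_congr hS hY3 hsum hYeq).trans (C.cond_split hS hY1 hY2 hAmeas)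
  filter_upwards [hc] with ω hω
  rw [hω]
  by_cases h : ω ∈ A
  · have hA' : C.E.cond S (C.Y σ₂) ω ≤ C.E.cond S (C.Y σ₁) ω := h
    have hc : ω ∉ Aᶜ := fun hc => hc h
    rw [Pi.add_apply, Set.indicator_of_mem h, Set.indicator_of_notMem hc, add_zero,
      max_eq_left hA']
  · have hA' : ¬ C.E.cond S (C.Y σ₂) ω ≤ C.E.cond S (C.Y σ₁) ω := h
    have hc : ω ∈ Aᶜ := h
    rw [Pi.add_apply, Set.indicator_of_notMem h, Set.indicator_of_mem hc, zero_add,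
      max_eq_right (le_of_not_ge hA')]

end Ctx

variable [IsProbabilityMeasure μ] in
lemma integrable_arctan {f : Ω → ℝ} (hf : Measurable f) :
    MeasureTheory.Integrable (fun ω => Real.arctan (f ω)) μ := by
  refine MeasureTheory.Integrable.mono' (MeasureTheory.integrable_const (Real.pi / 2))
    ((Real.continuous_arctan.measurable.comp hf).aestronglyMeasurable) ?_
  filter_upwards with ω
  rw [Real.norm_eq_abs, abs_le]
  exact ⟨by linarith [Real.neg_pi_div_two_lt_arctan (f ω)],
    (Real.arctan_lt_pi_div_two (f ω)).le⟩

namespace Ctx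

variable [IsProbabilityMeasure μ] (C : Ctx μ T ℱ)

/-- The essential supremum `W S` is attained as an a.e. increasing limit along a sequence
of stopping times in `S_S`. -/
lemma exists_seq_W {S : Ω → ℝ} (hS : Stop0 ℱ T S) :
    ∃ σs : ℕ → Ω → ℝ, (∀ n, IsStopIn ℱ T S (σs n)) ∧
      (∀ᵐ ω ∂μ, Monotone (fun n => C.E.cond S (C.Y (σs n)) ω) ∧
        Filter.Tendsto (fun n => C.E.cond S (C.Y (σs n)) ω) Filter.atTop
          (nhds (C.W S ω))) := by
  classical
  set I : (Ω → ℝ) → ℝ := fun σ => ∫ ω, Real.arctan (C.E.cond S (C.Y σ) ω) ∂μ with hIdef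
  set V : Set ℝ := {r | ∃ σ, IsStopIn ℱ T S σ ∧ r = I σ} with hVdef
  have hTmem : IsStopIn ℱ T S (fun _ => T) :=
    ⟨isStoppingTime_const ℱ T, hS.2.2, fun _ => le_rfl⟩
  have hVne : V.Nonempty := ⟨I (fun _ => T), ⟨_, hTmem, rfl⟩⟩
  have hintI : ∀ σ, IsStopIn ℱ T S σ →
      MeasureTheory.Integrable (fun ω => Real.arctan (C.E.cond S (C.Y σ) ω)) μ :=
    fun σ hσ => integrable_arctan (C.cond_meas hS (C.inD_Y (hσ.stop0 hS)))
  have hVbd : BddAbove V := by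
    refine ⟨Real.pi / 2, ?_⟩
    rintro r ⟨σ, hσ, rfl⟩
    calc I σ ≤ ∫ _ω, Real.pi / 2 ∂μ := by
          refine MeasureTheory.integral_mono (hintI σ hσ) (MeasureTheory.integrable_const _) ?_
          intro ω
          exact (Real.arctan_lt_pi_div_two _).le
      _ = Real.pi / 2 := by simp
  set α := sSup V with hα
  have hchoice : ∀ n : ℕ, ∃ σ, IsStopIn ℱ T S σ ∧ α - 1 / (n + 1) < I σ := by
    intro n
    have h1 : α - 1 / (n + 1) < α := by
      have : (0 : ℝ) < 1 / (n + 1) := by positivity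
      linarith
    obtain ⟨r, ⟨σ, hσ, rfl⟩, hr⟩ := exists_lt_of_lt_csSup hVne h1
    exact ⟨σ, hσ, hr⟩
  choose g hg hgI using hchoice
  have hcomb := fun (p q : Ω → ℝ) (hp : IsStopIn ℱ T S p) (hq : IsStopIn ℱ T S q) =>
    C.directed hS hp hq
  let step : ℕ → {p : Ω → ℝ // IsStopIn ℱ T S p} → {p : Ω → ℝ // IsStopIn ℱ T S p} :=
    fun n prev => ⟨Classical.choose (hcomb prev.1 (g (n + 1)) prev.2 (hg (n + 1))),
      (Classical.choose_spec (hcomb prev.1 (g (n + 1)) prev.2 (hg (n + 1)))).1⟩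
  let σsub : ℕ → {p : Ω → ℝ // IsStopIn ℱ T S p} :=
    fun n => Nat.rec (motive := fun _ => {p : Ω → ℝ // IsStopIn ℱ T S p}) ⟨g 0, hg 0⟩ step n
  set σs : ℕ → Ω → ℝ := fun n => (σsub n).1 with hσsdef
  have hmem : ∀ n, IsStopIn ℱ T S (σs n) := fun n => (σsub n).2
  set ξ : ℕ → Ω → ℝ := fun n => C.E.cond S (C.Y (σs n)) with hξdef
  have hξmeas : ∀ n, Measurable (ξ n) :=
    fun n => C.cond_meas hS (C.inD_Y ((hmem n).stop0 hS))
  have hspec : ∀ n, ξ (n + 1) =ᵐ[μ]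
      fun ω => max (ξ n ω) (C.E.cond S (C.Y (g (n + 1))) ω) := by
    intro n
    exact (Classical.choose_spec (hcomb (σsub n).1 (g (n + 1)) (σsub n).2 (hg (n + 1)))).2
  have hae1 : ∀ᵐ ω ∂μ, ∀ n, ξ n ω ≤ ξ (n + 1) ω ∧
      C.E.cond S (C.Y (g (n + 1))) ω ≤ ξ (n + 1) ω := by
    rw [MeasureTheory.ae_all_iff]
    intro n
    filter_upwards [hspec n] with ω hω
    constructor
    · rw [hω]; exact le_max_left _ _
    · rw [hω]; exact le_max_right _ _
  have hboundW : ∀ᵐ ω ∂μ, ∀ n, ξ n ω ≤ C.W S ω :=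
    MeasureTheory.ae_all_iff.mpr fun n => C.le_W hS (hmem n)
  set L : Ω → ℝ := limsupVer ξ with hLdef
  have hLmeas : Measurable L := limsupVer_measurable hξmeas
  have hmainae : ∀ᵐ ω ∂μ, Monotone (fun n => ξ n ω) ∧
      Filter.Tendsto (fun n => ξ n ω) Filter.atTop (nhds (L ω)) ∧ L ω ≤ C.W S ω := by
    filter_upwards [hae1, hboundW] with ω h1 h2
    have hmono : Monotone fun n => ξ n ω := monotone_nat_of_le_succ fun n => (h1 n).1
    have hbdd : BddAbove (Set.range fun n => ξ n ω) :=
      ⟨C.W S ω, by rintro x ⟨n, rfl⟩; exact h2 n⟩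
    have ht : Filter.Tendsto (fun n => ξ n ω) Filter.atTop (nhds (⨆ n, ξ n ω)) :=
      tendsto_atTop_ciSup hmono hbdd
    have hL : L ω = ⨆ n, ξ n ω := ht.limsup_eq
    exact ⟨hmono, by rw [hL]; exact ht, by rw [hL]; exact ciSup_le h2⟩
  set J : ℕ → ℝ := fun n => ∫ ω, Real.arctan (ξ n ω) ∂μ with hJdef
  have hJle : ∀ n, J n ≤ α := fun n => le_csSup hVbd ⟨σs n, hmem n, rfl⟩
  have hJlb : ∀ n, α - 1 / (n + 1) < J n := by
    intro n
    cases n with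
    | zero => exact hgI 0
    | succ k =>
        have hge : (fun ω => Real.arctan (C.E.cond S (C.Y (g (k + 1))) ω))
            ≤ᵐ[μ] fun ω => Real.arctan (ξ (k + 1) ω) := by
          filter_upwards [hae1] with ω h1
          exact Real.arctan_strictMono.monotone (h1 k).2
        have hle2 : I (g (k + 1)) ≤ J (k + 1) :=
          MeasureTheory.integral_mono_ae (hintI _ (hg (k + 1))) (integrable_arctan (hξmeas (k + 1))) hge
        exact lt_of_lt_of_le (hgI (k + 1)) hle2
  have hintL : MeasureTheory.Integrable (fun ω => Real.arctan (L ω)) μ :=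
    integrable_arctan hLmeas
  have hJtend : Filter.Tendsto J Filter.atTop (nhds (∫ ω, Real.arctan (L ω) ∂μ)) := by
    refine MeasureTheory.tendsto_integral_of_dominated_convergence (fun _ => Real.pi / 2)
      (fun n => (Real.continuous_arctan.measurable.comp (hξmeas n)).aestronglyMeasurable)
      (MeasureTheory.integrable_const _) (fun n => ?_) ?_
    · filter_upwards with ω
      rw [Real.norm_eq_abs, abs_le]
      exact ⟨by linarith [Real.neg_pi_div_two_lt_arctan (ξ n ω)],
        (Real.arctan_lt_pi_div_two (ξ n ω)).le⟩
    · filter_upwards [hmainae] with ω h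
      exact (Real.continuous_arctan.tendsto (L ω)).comp h.2.1
  have h1n : Filter.Tendsto (fun n : ℕ => α - 1 / (n + 1)) Filter.atTop (nhds α) := by
    have h0 : Filter.Tendsto (fun n : ℕ => 1 / ((n : ℝ) + 1)) Filter.atTop (nhds 0) :=
      tendsto_one_div_add_atTop_nhds_zero_nat
    have := (tendsto_const_nhds (x := α) (f := Filter.atTop (α := ℕ))).sub h0
    simpa using this
  have hJα : Filter.Tendsto J Filter.atTop (nhds α) :=
    tendsto_of_tendsto_of_tendsto_of_le_of_le h1n tendsto_const_nhds
      (fun n => (hJlb n).le) hJle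
  have hLα : ∫ ω, Real.arctan (L ω) ∂μ = α := tendsto_nhds_unique hJtend hJα
  -- every member of the family is dominated by L
  have hLub : ∀ σ, IsStopIn ℱ T S σ → C.E.cond S (C.Y σ) ≤ᵐ[μ] L := by
    intro σ hσ
    set g0 : Ω → ℝ := C.E.cond S (C.Y σ) with hg0def
    have hg0meas : Measurable g0 := C.cond_meas hS (C.inD_Y (hσ.stop0 hS))
    have hmax := fun n => C.directed hS (hmem n) hσ
    choose r hr hrs using hmax
    have hle : ∀ n, ∫ ω, Real.arctan (max (ξ n ω) (g0 ω)) ∂μ ≤ α := by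
      intro n
      have he : ∫ ω, Real.arctan (max (ξ n ω) (g0 ω)) ∂μ = I (r n) := by
        refine MeasureTheory.integral_congr_ae ?_
        filter_upwards [hrs n] with ω hω
        rw [hω]
      rw [he]
      exact le_csSup hVbd ⟨r n, hr n, rfl⟩
    have hintmax : ∀ n, MeasureTheory.Integrable
        (fun ω => Real.arctan (max (ξ n ω) (g0 ω))) μ :=
      fun n => integrable_arctan ((hξmeas n).max hg0meas)
    have hintmaxL : MeasureTheory.Integrable
        (fun ω => Real.arctan (max (L ω) (g0 ω))) μ :=
      integrable_arctan (hLmeas.max hg0meas)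
    have htmax : Filter.Tendsto (fun n => ∫ ω, Real.arctan (max (ξ n ω) (g0 ω)) ∂μ)
        Filter.atTop (nhds (∫ ω, Real.arctan (max (L ω) (g0 ω)) ∂μ)) := by
      refine MeasureTheory.tendsto_integral_of_dominated_convergence (fun _ => Real.pi / 2)
        (fun n => (Real.continuous_arctan.measurable.comp
          ((hξmeas n).max hg0meas)).aestronglyMeasurable)
        (MeasureTheory.integrable_const _) (fun n => ?_) ?_
      · filter_upwards with ω
        rw [Real.norm_eq_abs, abs_le]
        exact ⟨by linarith [Real.neg_pi_div_two_lt_arctan (max (ξ n ω) (g0 ω))],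
          (Real.arctan_lt_pi_div_two _).le⟩
      · filter_upwards [hmainae] with ω h
        have hmt : Filter.Tendsto (fun n => max (ξ n ω) (g0 ω)) Filter.atTop
            (nhds (max (L ω) (g0 ω))) := h.2.1.max tendsto_const_nhds
        exact (Real.continuous_arctan.tendsto (max (L ω) (g0 ω))).comp hmt
    have hfin : ∫ ω, Real.arctan (max (L ω) (g0 ω)) ∂μ ≤ α :=
      le_of_tendsto htmax (Filter.Eventually.of_forall hle)
    have hnonneg : 0 ≤ᵐ[μ] fun ω => Real.arctan (max (L ω) (g0 ω)) - Real.arctan (L ω) := by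
      filter_upwards with ω
      have := Real.arctan_strictMono.monotone (le_max_left (L ω) (g0 ω))
      simpa using this
    have hsub : MeasureTheory.Integrable
        (fun ω => Real.arctan (max (L ω) (g0 ω)) - Real.arctan (L ω)) μ := hintmaxL.sub hintL
    have hzero : ∫ ω, (Real.arctan (max (L ω) (g0 ω)) - Real.arctan (L ω)) ∂μ = 0 := by
      rw [MeasureTheory.integral_sub hintmaxL hintL, hLα]
      have hge : α ≤ ∫ ω, Real.arctan (max (L ω) (g0 ω)) ∂μ := by
        rw [← hLα]
        refine MeasureTheory.integral_mono hintL hintmaxL ?_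
        intro ω
        exact Real.arctan_strictMono.monotone (le_max_left _ _)
      linarith
    have hae0 := (MeasureTheory.integral_eq_zero_iff_of_nonneg_ae hnonneg hsub).mp hzero
    filter_upwards [hae0] with ω hω
    have heq : Real.arctan (max (L ω) (g0 ω)) = Real.arctan (L ω) := by
      have : Real.arctan (max (L ω) (g0 ω)) - Real.arctan (L ω) = 0 := hω
      linarith
    have hmaxeq : max (L ω) (g0 ω) = L ω := Real.arctan_injective heq
    exact max_eq_left_iff.mp hmaxeq
  have hWL : C.W S =ᵐ[μ] L := by
    refine (C.W_le hS hLub).antisymm ?_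
    filter_upwards [hmainae] with ω h
    exact h.2.2
  refine ⟨σs, hmem, ?_⟩
  filter_upwards [hmainae, hWL] with ω h hW
  exact ⟨h.1, by rw [hW]; exact h.2.1⟩

end Ctx

lemma constT_mem {ρ : Ω → ℝ} (hρ : Stop0 ℱ T ρ) : IsStopIn ℱ T ρ (fun _ => T) :=
  ⟨isStoppingTime_const ℱ T, hρ.2.2, fun _ => le_rfl⟩

namespace Ctx

variable [IsProbabilityMeasure μ] (C : Ctx μ T ℱ)

/-- The scalar value `sv ρ = sup_{σ ∈ S_ρ} E0[Y(σ)]`. -/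
noncomputable def sv (ρ : Ω → ℝ) : ℝ :=
  sSup {r : ℝ | ∃ σ, IsStopIn ℱ T ρ σ ∧ r = C.E.E0 (C.Y σ)}

lemma sv_set_nonempty {ρ : Ω → ℝ} (hρ : Stop0 ℱ T ρ) :
    {r : ℝ | ∃ σ, IsStopIn ℱ T ρ σ ∧ r = C.E.E0 (C.Y σ)}.Nonempty :=
  ⟨_, ⟨fun _ => T, constT_mem hρ, rfl⟩⟩

lemma sv_set_bdd {ρ : Ω → ℝ} (hρ : Stop0 ℱ T ρ) :
    BddAbove {r : ℝ | ∃ σ, IsStopIn ℱ T ρ σ ∧ r = C.E.E0 (C.Y σ)} := by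
  refine ⟨C.Cb + 1, ?_⟩
  rintro r ⟨σ, hσ, rfl⟩
  exact C.E0_Y_le_bound (hσ.stop0 hρ)

lemma le_sv {ρ σ : Ω → ℝ} (hρ : Stop0 ℱ T ρ) (hσ : IsStopIn ℱ T ρ σ) :
    C.E.E0 (C.Y σ) ≤ C.sv ρ :=
  le_csSup (C.sv_set_bdd hρ) ⟨σ, hσ, rfl⟩

lemma sv_le {ρ : Ω → ℝ} {b : ℝ} (hρ : Stop0 ℱ T ρ)
    (h : ∀ σ, IsStopIn ℱ T ρ σ → C.E.E0 (C.Y σ) ≤ b) : C.sv ρ ≤ b := by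
  refine csSup_le (C.sv_set_nonempty hρ) ?_
  rintro r ⟨σ, hσ, rfl⟩
  exact h σ hσ

lemma sv_anti {ρ₁ ρ₂ : Ω → ℝ} (h1 : Stop0 ℱ T ρ₁) (h2 : Stop0 ℱ T ρ₂)
    (h : ρ₁ ≤ᵐ[μ] ρ₂) : C.sv ρ₂ ≤ C.sv ρ₁ := by
  refine C.sv_le h2 fun σ hσ => ?_
  set σ' : Ω → ℝ := fun ω => max (σ ω) (ρ₁ ω) with hσ'def
  have hσ'mem : IsStopIn ℱ T ρ₁ σ' :=
    ⟨hσ.1.max h1.1, fun ω => le_max_right _ _, fun ω => max_le (hσ.2.2 ω) (h1.2.2 ω)⟩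
  have hae : σ =ᵐ[μ] σ' := by
    filter_upwards [h] with ω hω
    have : ρ₁ ω ≤ σ ω := le_trans hω (hσ.2.1 ω)
    simp [hσ'def, max_eq_left this]
  have := C.E0_congr (C.inD_Y (hσ.stop0 h2)) (C.inD_Y (hσ'mem.stop0 h1))
    (C.Y_congr_ae (hσ.stop0 h2) (hσ'mem.stop0 h1) hae)
  rw [this]
  exact C.le_sv h1 hσ'mem

lemma sv_congr {ρ₁ ρ₂ : Ω → ℝ} (h1 : Stop0 ℱ T ρ₁) (h2 : Stop0 ℱ T ρ₂)
    (h : ρ₁ =ᵐ[μ] ρ₂) : C.sv ρ₁ = C.sv ρ₂ :=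
  le_antisymm (C.sv_anti h2 h1 h.symm.le) (C.sv_anti h1 h2 h.le)

lemma W_ge_one {S : Ω → ℝ} (hS : Stop0 ℱ T S) : (fun _ => (1 : ℝ)) ≤ᵐ[μ] C.W S := by
  have hYT : (fun _ => (1 : ℝ)) ≤ᵐ[μ] C.Y (fun _ => T) := by
    filter_upwards [(C.inD_X C.stop0_T).2] with ω h0
    rw [C.hYdef]
    rw [if_pos (C.hθ.2.2 ω)]
    have : (0 : ℝ) ≤ C.X (fun _ => T) ω := h0
    linarith
  have h1 : C.E.cond S (fun _ => (1:ℝ)) ≤ᵐ[μ] C.E.cond S (C.Y (fun _ => T)) :=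
    C.cond_mono hS (C.inD_const zero_le_one) (C.inD_Y C.stop0_T) hYT
  have h2 : C.E.cond S (fun _ => (1:ℝ)) =ᵐ[μ] fun _ => (1:ℝ) :=
    C.cond_self hS (C.inD_const zero_le_one)
      (@measurable_const ℝ Ω _ hS.1.measurableSpace 1)
  have h3 := C.le_W hS (constT_mem hS)
  filter_upwards [h1, h2, h3] with ω k1 k2 k3
  rw [← k2]
  exact le_trans k1 k3

lemma inD_W {S : Ω → ℝ} (hS : Stop0 ℱ T S) : C.InD (C.W S) := by
  obtain ⟨σs, hmem, hconv⟩ := C.exists_seq_W hS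
  have hnn : 0 ≤ᵐ[μ] C.W S := by
    filter_upwards [hconv, (C.inD_cond hS (C.inD_Y ((hmem 0).stop0 hS))).2] with ω h h0
    have : (0:ℝ) ≤ C.E.cond S (C.Y (σs 0)) ω := h0
    exact le_trans this (h.1.ge_of_tendsto h.2 0)
  refine ⟨C.E.h5 (ξ := fun n => C.E.cond S (C.Y (σs n)))
    (fun n => (C.inD_cond hS (C.inD_Y ((hmem n).stop0 hS))).1)
    (fun n => (C.inD_cond hS (C.inD_Y ((hmem n).stop0 hS))).2) ?_ ?_, hnn⟩
  · filter_upwards [hconv] with ω h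
    exact h.2
  · refine ⟨C.Cb + 1, Filter.Frequently.of_forall fun n => ?_⟩
    rw [C.E0_cond hS (C.inD_Y ((hmem n).stop0 hS))]
    exact C.E0_Y_le_bound ((hmem n).stop0 hS)

/-- `E0[W(ρ)] = sv ρ`. -/
lemma E0_W {ρ : Ω → ℝ} (hρ : Stop0 ℱ T ρ) : C.E.E0 (C.W ρ) = C.sv ρ := by
  obtain ⟨σs, hmem, hconv⟩ := C.exists_seq_W hρ
  have hmct := C.E0_MCT (ξ := fun n => C.E.cond ρ (C.Y (σs n)))
    (fun n => C.inD_cond hρ (C.inD_Y ((hmem n).stop0 hρ)))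
    (fun n => C.cond_meas hρ (C.inD_Y ((hmem n).stop0 hρ))) (C.inD_W hρ) hconv
  refine le_antisymm ?_ ?_
  · refine le_of_tendsto hmct (Filter.Eventually.of_forall fun n => ?_)
    rw [C.E0_cond hρ (C.inD_Y ((hmem n).stop0 hρ))]
    exact C.le_sv hρ (hmem n)
  · refine C.sv_le hρ fun σ hσ => ?_
    rw [← C.E0_cond hρ (C.inD_Y (hσ.stop0 hρ))]
    exact C.E0_mono (C.inD_cond hρ (C.inD_Y (hσ.stop0 hρ))) (C.inD_W hρ) (C.le_W hρ hσ)

/-- Conditional expectations at two stopping times agree a.e. on the event where the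
stopping times agree. -/
lemma cond_eq_on_eq {ρ₁ ρ₂ ξ : Ω → ℝ} (h1 : Stop0 ℱ T ρ₁) (h2 : Stop0 ℱ T ρ₂)
    (hξ : C.InD ξ) :
    ∀ᵐ ω ∂μ, ρ₁ ω = ρ₂ ω → C.E.cond ρ₁ ξ ω = C.E.cond ρ₂ ξ ω := by
  have hκ : Stop0 ℱ T (fun ω => min (ρ₁ ω) (ρ₂ ω)) := h1.min h2
  set E : Set Ω := {ω | ρ₁ ω = ρ₂ ω} with hEdef
  have hEmeas : MeasurableSet[hκ.1.measurableSpace] E := measurableSet_eq_min h1.1 h2.1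
  have hEm : MeasurableSet E := hκ.1.measurableSpace_le _ hEmeas
  have hsymm : ∀ s : Set Ω,
      MeasurableSet[(isStoppingTime_min' h2.1 h1.1).measurableSpace] s →
      MeasurableSet[hκ.1.measurableSpace] s := by
    intro s hs
    refine mset_coe_mk hκ.1 fun t => ?_
    have heq : {ω | (fun ω => min (ρ₁ ω) (ρ₂ ω)) ω ≤ t}
        = {ω | (fun ω => min (ρ₂ ω) (ρ₁ ω)) ω ≤ t} := by
      ext ω; simp [min_comm]
    show MeasurableSet[ℱ t] (s ∩ {ω | (fun ω => min (ρ₁ ω) (ρ₂ ω)) ω ≤ t})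
    rw [heq]
    exact mset_coe_le hs t
  have key : ∀ (ρ : Ω → ℝ) (hρ : Stop0 ℱ T ρ), (∀ ω, min (ρ₁ ω) (ρ₂ ω) ≤ ρ ω) →
      (∀ s : Set Ω, MeasurableSet[hρ.1.measurableSpace] s →
        MeasurableSet[hκ.1.measurableSpace] (s ∩ E)) →
      E.indicator (C.E.cond ρ ξ) =ᵐ[μ] E.indicator (C.E.cond (fun ω => min (ρ₁ ω) (ρ₂ ω)) ξ) := by
    intro ρ hρ hle hinter
    have ha : C.InD (C.E.cond ρ ξ) := C.inD_cond hρ hξ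
    have hbmeas : Measurable[hκ.1.measurableSpace] (E.indicator (C.E.cond ρ ξ)) :=
      measurable_indicator_of_inter (C.E.cond_adapted hρ hξ.1 hξ.2) hEmeas hinter
    have hbInD : C.InD (E.indicator (C.E.cond ρ ξ)) := C.inD_indicator ha hEm
    have hself : C.E.cond (fun ω => min (ρ₁ ω) (ρ₂ ω)) (E.indicator (C.E.cond ρ ξ))
        =ᵐ[μ] E.indicator (C.E.cond ρ ξ) := C.cond_self hκ hbInD hbmeas
    have hzo : C.E.cond (fun ω => min (ρ₁ ω) (ρ₂ ω)) (E.indicator (C.E.cond ρ ξ))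
        =ᵐ[μ] E.indicator (C.E.cond (fun ω => min (ρ₁ ω) (ρ₂ ω)) (C.E.cond ρ ξ)) :=
      C.cond_indicator hκ ha hEmeas
    have htc : C.E.cond (fun ω => min (ρ₁ ω) (ρ₂ ω)) (C.E.cond ρ ξ)
        =ᵐ[μ] C.E.cond (fun ω => min (ρ₁ ω) (ρ₂ ω)) ξ :=
      C.E.time_consistent hκ hρ hle hξ.1 hξ.2
    refine hself.symm.trans (hzo.trans ?_)
    filter_upwards [htc] with ω hω
    by_cases h : ω ∈ E
    · rw [Set.indicator_of_mem h, Set.indicator_of_mem h, hω]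
    · rw [Set.indicator_of_notMem h, Set.indicator_of_notMem h]
  have k1 := key ρ₁ h1 (fun ω => min_le_left _ _) (fun s hs => inter_eq_mem h1.1 h2.1 hs)
  have k2 := key ρ₂ h2 (fun ω => min_le_right _ _) (fun s hs => by
    have h' := inter_eq_mem h2.1 h1.1 hs
    have heq : s ∩ {ω | ρ₂ ω = ρ₁ ω} = s ∩ E := by
      ext ω; simp [hEdef, eq_comm]
    rw [heq] at h'
    exact hsymm _ h')
  filter_upwards [k1, k2] with ω hω1 hω2
  intro hE
  have h : ω ∈ E := hE
  have e1 : C.E.cond ρ₁ ξ ω = E.indicator (C.E.cond ρ₁ ξ) ω := (Set.indicator_of_mem h _).symm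
  have e2 : C.E.cond ρ₂ ξ ω = E.indicator (C.E.cond ρ₂ ξ) ω := (Set.indicator_of_mem h _).symm
  rw [e1, e2, hω1, hω2]

end Ctx

namespace Ctx

variable [IsProbabilityMeasure μ] (C : Ctx μ T ℱ)

/-- Localized domination: on an `F_ρ`-set where `ρ ≤ σ`, `E_ρ[Y(σ)] ≤ W(ρ)`. -/
lemma indicator_cond_le_W {ρ σ : Ω → ℝ} (hρ : Stop0 ℱ T ρ) (hσ : Stop0 ℱ T σ) {A : Set Ω}
    (hA : MeasurableSet[hρ.1.measurableSpace] A) (hAle : ∀ ω ∈ A, ρ ω ≤ σ ω) :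
    ∀ᵐ ω ∂μ, ω ∈ A → C.E.cond ρ (C.Y σ) ω ≤ C.W ρ ω := by
  have hAm : MeasurableSet A := hρ.1.measurableSpace_le _ hA
  set σ'' : Ω → ℝ := fun ω => if ω ∈ A then σ ω else T with hσ''def
  have hstop'' : IsStoppingTime ℱ (fun ω => (σ'' ω : WithTop ℝ)) :=
    isStoppingTime_ite A (inter_le_mem_of_le hρ.1 hσ.1 hA hAle)
      (inter_le_mem_constT hρ.1 hA.compl hρ.2.2)
  have hmem'' : IsStopIn ℱ T ρ σ'' := by
    refine ⟨hstop'', fun ω => ?_, fun ω => ?_⟩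
    · by_cases h : ω ∈ A
      · simpa only [hσ''def, if_pos h] using hAle ω h
      · simpa only [hσ''def, if_neg h] using hρ.2.2 ω
    · by_cases h : ω ∈ A
      · simpa only [hσ''def, if_pos h] using hσ.2.2 ω
      · simp only [hσ''def, if_neg h]
        exact le_rfl
  have hY'' := C.inD_Y (hmem''.stop0 hρ)
  have hYσ := C.inD_Y hσ
  have hind1 : A.indicator (C.Y σ) =ᵐ[μ] A.indicator (C.Y σ'') := by
    filter_upwards [C.Y_congr_ptwise hσ (hmem''.stop0 hρ)] with ω hω
    by_cases h : ω ∈ A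
    · rw [Set.indicator_of_mem h, Set.indicator_of_mem h,
        hω (by simp only [hσ''def, if_pos h])]
    · rw [Set.indicator_of_notMem h, Set.indicator_of_notMem h]
  have hz1 := C.cond_indicator hρ hYσ hA
  have hz2 := C.cond_indicator hρ hY'' hA
  have hcc := C.cond_congr hρ (C.inD_indicator hYσ hAm) (C.inD_indicator hY'' hAm) hind1
  have hlw := C.le_W hρ hmem''
  filter_upwards [hz1, hz2, hcc, hlw] with ω k1 k2 k3 k4
  intro hωA
  have e1 : C.E.cond ρ (C.Y σ) ω = A.indicator (C.E.cond ρ (C.Y σ)) ω :=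
    (Set.indicator_of_mem hωA _).symm
  rw [e1, ← k1, k3, k2, Set.indicator_of_mem hωA]
  exact k4

/-- `W` is compatible: a.e. on `{ρ₁ = ρ₂}`, `W ρ₁ = W ρ₂`. -/
lemma W_eq_on_eq {ρ₁ ρ₂ : Ω → ℝ} (h1 : Stop0 ℱ T ρ₁) (h2 : Stop0 ℱ T ρ₂) :
    ∀ᵐ ω ∂μ, ρ₁ ω = ρ₂ ω → C.W ρ₁ ω = C.W ρ₂ ω := by
  have hκ : Stop0 ℱ T (fun ω => min (ρ₁ ω) (ρ₂ ω)) := h1.min h2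
  set E : Set Ω := {ω | ρ₁ ω = ρ₂ ω} with hEdef
  have hEκ : MeasurableSet[hκ.1.measurableSpace] E := measurableSet_eq_min h1.1 h2.1
  have key : ∀ ρ₁' ρ₂' : Ω → ℝ, ∀ h1' : Stop0 ℱ T ρ₁', ∀ h2' : Stop0 ℱ T ρ₂',
      ∀ᵐ ω ∂μ, ρ₁' ω = ρ₂' ω → C.W ρ₁' ω ≤ C.W ρ₂' ω := by
    intro ρ₁' ρ₂' h1' h2'
    set E' : Set Ω := {ω | ρ₁' ω = ρ₂' ω} with hE'def
    have hκ' : Stop0 ℱ T (fun ω => min (ρ₁' ω) (ρ₂' ω)) := h1'.min h2'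
    have hE'κ : MeasurableSet[hκ'.1.measurableSpace] E' := measurableSet_eq_min h1'.1 h2'.1
    have hE'1 : MeasurableSet[h1'.1.measurableSpace] E' :=
      hκ'.1.measurableSpace_mono h1'.1 (fun ω => WithTop.coe_le_coe.2 (min_le_left _ _)) _ hE'κ
    have hE'2 : MeasurableSet[h2'.1.measurableSpace] E' :=
      hκ'.1.measurableSpace_mono h2'.1 (fun ω => WithTop.coe_le_coe.2 (min_le_right _ _)) _ hE'κ
    obtain ⟨σs, hmem, hconv⟩ := C.exists_seq_W h1'
    have hn : ∀ n, ∀ᵐ ω ∂μ, ω ∈ E' → C.E.cond ρ₁' (C.Y (σs n)) ω ≤ C.W ρ₂' ω := by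
      intro n
      have hceq := C.cond_eq_on_eq h1' h2' (C.inD_Y ((hmem n).stop0 h1'))
      have hloc := C.indicator_cond_le_W h2' ((hmem n).stop0 h1') hE'2
        (fun ω hω => by
          have : ρ₂' ω = ρ₁' ω := (hω : ρ₁' ω = ρ₂' ω).symm
          rw [this]; exact (hmem n).2.1 ω)
      filter_upwards [hceq, hloc] with ω k1 k2
      intro hωE
      rw [k1 hωE]
      exact k2 hωE
    have hall := MeasureTheory.ae_all_iff.mpr hn
    filter_upwards [hconv, hall] with ω h hωall
    intro hωE
    exact le_of_tendsto h.2 (Filter.Eventually.of_forall fun n => hωall n hωE)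
  have k12 := key ρ₁ ρ₂ h1 h2
  have k21 := key ρ₂ ρ₁ h2 h1
  filter_upwards [k12, k21] with ω a1 a2
  intro he
  exact le_antisymm (a1 he) (a2 he.symm)

lemma W_congr_ae {ρ₁ ρ₂ : Ω → ℝ} (h1 : Stop0 ℱ T ρ₁) (h2 : Stop0 ℱ T ρ₂)
    (h : ρ₁ =ᵐ[μ] ρ₂) : C.W ρ₁ =ᵐ[μ] C.W ρ₂ := by
  filter_upwards [C.W_eq_on_eq h1 h2, h] with ω hω he
  exact hω he

end Ctx

namespace Ctx

variable [IsProbabilityMeasure μ] (C : Ctx μ T ℱ)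

/-- The set `D^λ_S` of stopping times in `S_S` where `λ W ≤ Y` a.e. -/
def Dset (lam : ℝ) (S : Ω → ℝ) : Set (Ω → ℝ) :=
  {τ | IsStopIn ℱ T S τ ∧ (fun ω => lam * C.W τ ω) ≤ᵐ[μ] C.Y τ}

/-- The set `D_S` of stopping times in `S_S` where `W = Y` a.e. -/
def Dopt (S : Ω → ℝ) : Set (Ω → ℝ) :=
  {τ | IsStopIn ℱ T S τ ∧ C.W τ =ᵐ[μ] C.Y τ}

lemma W_T_eq : C.W (fun _ => T) =ᵐ[μ] C.Y (fun _ => T) := by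
  have hle : C.W (fun _ => T) ≤ᵐ[μ] C.Y (fun _ => T) := by
    refine C.W_le C.stop0_T fun σ hσ => ?_
    have hσT : σ = fun _ => T := funext fun ω => le_antisymm (hσ.2.2 ω) (hσ.2.1 ω)
    subst hσT
    exact (C.cond_self C.stop0_T (C.inD_Y C.stop0_T) (C.Y_measF C.stop0_T)).le
  have hge := C.le_W C.stop0_T (constT_mem C.stop0_T)
  have hcs := C.cond_self C.stop0_T (C.inD_Y C.stop0_T) (C.Y_measF C.stop0_T)
  refine hle.antisymm ?_
  filter_upwards [hge, hcs] with ω k1 k2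
  rw [← k2]
  exact k1

lemma T_mem_Dset {lam : ℝ} (hlam1 : lam ≤ 1) {S : Ω → ℝ} (hS : Stop0 ℱ T S) :
    (fun _ => T) ∈ C.Dset lam S := by
  refine ⟨constT_mem hS, ?_⟩
  filter_upwards [C.W_T_eq, (C.inD_W C.stop0_T).2] with ω k1 k2
  have h0 : (0:ℝ) ≤ C.W (fun _ => T) ω := k2
  rw [← k1]
  nlinarith

lemma T_mem_Dopt {S : Ω → ℝ} (hS : Stop0 ℱ T S) : (fun _ => T) ∈ C.Dopt S :=
  ⟨constT_mem hS, C.W_T_eq⟩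

lemma Dopt_subset_Dset {lam : ℝ} (hlam1 : lam ≤ 1) {S : Ω → ℝ} (hS : Stop0 ℱ T S) :
    C.Dopt S ⊆ C.Dset lam S := by
  rintro τ ⟨hmem, heq⟩
  refine ⟨hmem, ?_⟩
  filter_upwards [heq, C.W_ge_one (hmem.stop0 hS)] with ω k1 k2
  rw [← k1]
  have h1 : (1:ℝ) ≤ C.W τ ω := k2
  nlinarith

lemma Dset_ge_theta {lam : ℝ} (hlam0 : 0 < lam) {S : Ω → ℝ} (hS : Stop0 ℱ T S)
    {τ : Ω → ℝ} (hτ : τ ∈ C.Dset lam S) : C.θ ≤ᵐ[μ] τ := by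
  obtain ⟨hmem, hineq⟩ := hτ
  filter_upwards [hineq, C.W_ge_one (hmem.stop0 hS)] with ω k1 k2
  by_contra hc
  push_neg at hc
  have hY0 : C.Y τ ω = 0 := by
    rw [C.hYdef, if_neg (not_le.mpr hc)]
  have h1 : (1:ℝ) ≤ C.W τ ω := k2
  have h2 : lam * C.W τ ω ≤ 0 := by rw [← hY0]; exact k1
  nlinarith

lemma Dset_min {lam : ℝ} {S : Ω → ℝ} (hS : Stop0 ℱ T S) {τ σ : Ω → ℝ}
    (hτ : τ ∈ C.Dset lam S) (hσ : σ ∈ C.Dset lam S) :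
    (fun ω => min (τ ω) (σ ω)) ∈ C.Dset lam S := by
  obtain ⟨hmτ, hiτ⟩ := hτ
  obtain ⟨hmσ, hiσ⟩ := hσ
  have hmem : IsStopIn ℱ T S (fun ω => min (τ ω) (σ ω)) :=
    ⟨hmτ.1.min hmσ.1, fun ω => le_min (hmτ.2.1 ω) (hmσ.2.1 ω),
      fun ω => le_trans (min_le_left _ _) (hmτ.2.2 ω)⟩
  refine ⟨hmem, ?_⟩
  have hW1 := C.W_eq_on_eq (hmem.stop0 hS) (hmτ.stop0 hS)
  have hW2 := C.W_eq_on_eq (hmem.stop0 hS) (hmσ.stop0 hS)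
  have hY1 := C.Y_congr_ptwise (hmem.stop0 hS) (hmτ.stop0 hS)
  have hY2 := C.Y_congr_ptwise (hmem.stop0 hS) (hmσ.stop0 hS)
  filter_upwards [hiτ, hiσ, hW1, hW2, hY1, hY2] with ω k1 k2 w1 w2 y1 y2
  by_cases h : τ ω ≤ σ ω
  · have he : min (τ ω) (σ ω) = τ ω := min_eq_left h
    rw [w1 he, y1 he]
    exact k1
  · have he : min (τ ω) (σ ω) = σ ω := min_eq_right (le_of_not_ge h)
    rw [w2 he, y2 he]
    exact k2

/-- Attainment of the essential infimum of `D^λ_S` by a decreasing sequence. -/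
lemma exists_tauLam {lam : ℝ} {S : Ω → ℝ} (hS : Stop0 ℱ T S) (hlam1 : lam ≤ 1) :
    ∃ (νs : ℕ → Ω → ℝ) (ρ : Ω → ℝ),
      (∀ k, νs k ∈ C.Dset lam S) ∧
      (∀ ω, Antitone fun k => νs k ω) ∧
      (∀ ω, Filter.Tendsto (fun k => νs k ω) Filter.atTop (nhds (ρ ω))) ∧
      IsStoppingTime ℱ (fun ω => (ρ ω : WithTop ℝ)) ∧ (∀ ω, S ω ≤ ρ ω ∧ ρ ω ≤ T) ∧
      (∀ τ ∈ C.Dset lam S, ρ ≤ᵐ[μ] τ) := by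
  classical
  set I : (Ω → ℝ) → ℝ := fun τ => ∫ ω, Real.arctan (τ ω) ∂μ with hIdef
  set V : Set ℝ := {r | ∃ τ ∈ C.Dset lam S, r = I τ} with hVdef
  have hVne : V.Nonempty := ⟨I (fun _ => T), ⟨_, C.T_mem_Dset hlam1 hS, rfl⟩⟩
  have hmeasD : ∀ τ ∈ C.Dset lam S, Measurable τ := fun τ hτ => (hτ.1.stop0 hS).measurable
  have hVbd : BddBelow V := by
    refine ⟨-(Real.pi / 2), ?_⟩
    rintro r ⟨τ, hτ, rfl⟩
    calc (-(Real.pi/2) : ℝ) = ∫ _ω, -(Real.pi/2) ∂μ := by simp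
      _ ≤ I τ := by
          refine MeasureTheory.integral_mono (MeasureTheory.integrable_const _)
            (integrable_arctan (hmeasD τ hτ)) ?_
          intro ω
          exact (Real.neg_pi_div_two_lt_arctan _).le
  set α := sInf V with hα
  have hchoice : ∀ k : ℕ, ∃ τ ∈ C.Dset lam S, I τ < α + 1 / (k + 1) := by
    intro k
    have h1 : α < α + 1 / (k + 1) := by
      have : (0:ℝ) < 1 / (k + 1) := by positivity
      linarith
    obtain ⟨r, ⟨τ, hτ, rfl⟩, hr⟩ := exists_lt_of_csInf_lt hVne h1
    exact ⟨τ, hτ, hr⟩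
  choose g hg hgI using hchoice
  let step : ℕ → {p : Ω → ℝ // p ∈ C.Dset lam S} → {p : Ω → ℝ // p ∈ C.Dset lam S} :=
    fun k prev => ⟨fun ω => min (prev.1 ω) (g (k + 1) ω), C.Dset_min hS prev.2 (hg (k + 1))⟩
  let νsub : ℕ → {p : Ω → ℝ // p ∈ C.Dset lam S} :=
    fun k => Nat.rec (motive := fun _ => {p : Ω → ℝ // p ∈ C.Dset lam S}) ⟨g 0, hg 0⟩ step k
  set νs : ℕ → Ω → ℝ := fun k => (νsub k).1 with hνsdef
  have hmem : ∀ k, νs k ∈ C.Dset lam S := fun k => (νsub k).2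
  have hanti : ∀ ω, Antitone fun k => νs k ω := by
    intro ω
    refine antitone_nat_of_succ_le fun k => ?_
    exact min_le_left _ _
  have hbd0 : ∀ k ω, 0 ≤ νs k ω :=
    fun k ω => le_trans (hS.2.1 ω) ((hmem k).1.2.1 ω)
  have hbdd : ∀ ω, BddBelow (Set.range fun k => νs k ω) :=
    fun ω => ⟨0, by rintro x ⟨k, rfl⟩; exact hbd0 k ω⟩
  set ρ : Ω → ℝ := fun ω => ⨅ k, νs k ω with hρdef
  have htend : ∀ ω, Filter.Tendsto (fun k => νs k ω) Filter.atTop (nhds (ρ ω)) :=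
    fun ω => tendsto_atTop_ciInf (hanti ω) (hbdd ω)
  have hstop : IsStoppingTime ℱ (fun ω => (ρ ω : WithTop ℝ)) :=
    isStoppingTime_iInf C.hrcf (fun k => (hmem k).1.1) hbd0
  have hbounds : ∀ ω, S ω ≤ ρ ω ∧ ρ ω ≤ T := by
    intro ω
    constructor
    · exact le_ciInf fun k => (hmem k).1.2.1 ω
    · exact le_trans (ciInf_le (hbdd ω) 0) ((hmem 0).1.2.2 ω)
  have hρmeas : Measurable ρ :=
    Stop0.measurable ⟨hstop, fun ω => le_trans (hS.2.1 ω) (hbounds ω).1, fun ω => (hbounds ω).2⟩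
  refine ⟨νs, ρ, hmem, hanti, htend, hstop, hbounds, ?_⟩
  -- minimality
  have hIν_lt : ∀ k, I (νs k) < α + 1 / (k + 1) := by
    intro k
    have hle : I (νs k) ≤ I (g k) := by
      refine MeasureTheory.integral_mono (integrable_arctan (hmeasD _ (hmem k)))
        (integrable_arctan (hmeasD _ (hg k))) ?_
      intro ω
      refine Real.arctan_strictMono.monotone ?_
      cases k with
      | zero => exact le_rfl
      | succ j => exact min_le_right _ _
    exact lt_of_le_of_lt hle (hgI k)
  have hIν_ge : ∀ k, α ≤ I (νs k) := fun k => csInf_le hVbd ⟨νs k, hmem k, rfl⟩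
  have hdom : ∀ (f : Ω → ℝ), Measurable f →
      (∀ ω, Filter.Tendsto (fun k => Real.arctan (νs k ω)) Filter.atTop
        (nhds (Real.arctan (f ω)))) →
      Filter.Tendsto (fun k => I (νs k)) Filter.atTop (nhds (∫ ω, Real.arctan (f ω) ∂μ)) := by
    intro f hf hconv
    refine MeasureTheory.tendsto_integral_of_dominated_convergence (fun _ => Real.pi / 2)
      (fun k => (Real.continuous_arctan.measurable.comp (hmeasD _ (hmem k))).aestronglyMeasurable)
      (MeasureTheory.integrable_const _) (fun k => ?_) ?_
    · filter_upwards with ω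
      rw [Real.norm_eq_abs, abs_le]
      exact ⟨by linarith [Real.neg_pi_div_two_lt_arctan (νs k ω)],
        (Real.arctan_lt_pi_div_two _).le⟩
    · filter_upwards with ω
      exact hconv ω
  have hIρ : Filter.Tendsto (fun k => I (νs k)) Filter.atTop
      (nhds (∫ ω, Real.arctan (ρ ω) ∂μ)) :=
    hdom ρ hρmeas fun ω => (Real.continuous_arctan.tendsto (ρ ω)).comp (htend ω)
  have h1n : Filter.Tendsto (fun k : ℕ => α + 1 / ((k:ℝ) + 1)) Filter.atTop (nhds α) := by
    have h0 : Filter.Tendsto (fun k : ℕ => 1 / ((k : ℝ) + 1)) Filter.atTop (nhds 0) :=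
      tendsto_one_div_add_atTop_nhds_zero_nat
    have := (tendsto_const_nhds (x := α) (f := Filter.atTop (α := ℕ))).add h0
    simpa using this
  have hIα : Filter.Tendsto (fun k => I (νs k)) Filter.atTop (nhds α) :=
    tendsto_of_tendsto_of_tendsto_of_le_of_le tendsto_const_nhds h1n hIν_ge
      (fun k => (hIν_lt k).le)
  have hρα : ∫ ω, Real.arctan (ρ ω) ∂μ = α := tendsto_nhds_unique hIρ hIα
  intro τ hτ
  -- compare with min
  have hmink : ∀ k, (fun ω => min (νs k ω) (τ ω)) ∈ C.Dset lam S :=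
    fun k => C.Dset_min hS (hmem k) hτ
  have hge : ∀ k, α ≤ ∫ ω, Real.arctan (min (νs k ω) (τ ω)) ∂μ :=
    fun k => csInf_le hVbd ⟨_, hmink k, rfl⟩
  have hτmeas : Measurable τ := hmeasD τ hτ
  have htmin : Filter.Tendsto (fun k => ∫ ω, Real.arctan (min (νs k ω) (τ ω)) ∂μ)
      Filter.atTop (nhds (∫ ω, Real.arctan (min (ρ ω) (τ ω)) ∂μ)) := by
    refine MeasureTheory.tendsto_integral_of_dominated_convergence (fun _ => Real.pi / 2)
      (fun k => (Real.continuous_arctan.measurable.comp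
        ((hmeasD _ (hmem k)).min hτmeas)).aestronglyMeasurable)
      (MeasureTheory.integrable_const _) (fun k => ?_) ?_
    · filter_upwards with ω
      rw [Real.norm_eq_abs, abs_le]
      exact ⟨by linarith [Real.neg_pi_div_two_lt_arctan (min (νs k ω) (τ ω))],
        (Real.arctan_lt_pi_div_two _).le⟩
    · filter_upwards with ω
      exact (Real.continuous_arctan.tendsto _).comp ((htend ω).min tendsto_const_nhds)
  have hminα : α ≤ ∫ ω, Real.arctan (min (ρ ω) (τ ω)) ∂μ :=
    ge_of_tendsto htmin (Filter.Eventually.of_forall hge)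
  have hintρ : MeasureTheory.Integrable (fun ω => Real.arctan (ρ ω)) μ :=
    integrable_arctan hρmeas
  have hintmin : MeasureTheory.Integrable (fun ω => Real.arctan (min (ρ ω) (τ ω))) μ :=
    integrable_arctan (hρmeas.min hτmeas)
  have hnonneg : 0 ≤ᵐ[μ] fun ω => Real.arctan (ρ ω) - Real.arctan (min (ρ ω) (τ ω)) := by
    filter_upwards with ω
    have := Real.arctan_strictMono.monotone (min_le_left (ρ ω) (τ ω))
    simpa using this
  have hzero : ∫ ω, (Real.arctan (ρ ω) - Real.arctan (min (ρ ω) (τ ω))) ∂μ = 0 := by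
    rw [MeasureTheory.integral_sub hintρ hintmin, hρα]
    have hle2 : ∫ ω, Real.arctan (min (ρ ω) (τ ω)) ∂μ ≤ α := by
      rw [← hρα]
      refine MeasureTheory.integral_mono hintmin hintρ ?_
      intro ω
      exact Real.arctan_strictMono.monotone (min_le_left _ _)
    linarith
  have hae0 := (MeasureTheory.integral_eq_zero_iff_of_nonneg_ae hnonneg
    (hintρ.sub hintmin)).mp hzero
  filter_upwards [hae0] with ω hω
  have heq : Real.arctan (ρ ω) = Real.arctan (min (ρ ω) (τ ω)) := by
    have h0 : Real.arctan (ρ ω) - Real.arctan (min (ρ ω) (τ ω)) = 0 := hω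
    linarith
  have hmineq : ρ ω = min (ρ ω) (τ ω) := Real.arctan_injective heq
  have := min_le_right (ρ ω) (τ ω)
  rw [← hmineq] at this
  exact this

end Ctx

namespace Ctx

variable [IsProbabilityMeasure μ] (C : Ctx μ T ℱ)

lemma max_theta_mem {ρ σ : Ω → ℝ} (hρ : Stop0 ℱ T ρ) (hσ : IsStopIn ℱ T ρ σ) :
    IsStopIn ℱ T ρ (fun ω => max (σ ω) (C.θ ω)) :=
  ⟨hσ.1.max C.hθ.1, fun ω => le_trans (hσ.2.1 ω) (le_max_left _ _),
    fun ω => max_le (hσ.2.2 ω) (C.hθ.2.2 ω)⟩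

lemma E0_Y_le_max_theta {ρ σ : Ω → ℝ} (hρ : Stop0 ℱ T ρ) (hσ : IsStopIn ℱ T ρ σ) :
    C.E.E0 (C.Y σ) ≤ C.E.E0 (C.Y (fun ω => max (σ ω) (C.θ ω))) := by
  have hmem := C.max_theta_mem hρ hσ
  refine C.E0_mono (C.inD_Y (hσ.stop0 hρ)) (C.inD_Y (hmem.stop0 hρ)) ?_
  filter_upwards [C.Y_congr_ptwise (hσ.stop0 hρ) (hmem.stop0 hρ),
    (C.inD_Y (hmem.stop0 hρ)).2] with ω k1 k2
  by_cases h : C.θ ω ≤ σ ω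
  · rw [k1 (by simp [max_eq_left h])]
  · have hY0 : C.Y σ ω = 0 := by rw [C.hYdef, if_neg h]
    rw [hY0]
    exact k2

/-- Scalar right-continuity of the value along decreasing sequences of stopping times. -/
lemma sv_RCE {ρ : Ω → ℝ} (hρ : Stop0 ℱ T ρ) {ρs : ℕ → Ω → ℝ} (hρs : ∀ k, Stop0 ℱ T (ρs k))
    (hanti : ∀ ω, Antitone fun k => ρs k ω)
    (htend : ∀ ω, Filter.Tendsto (fun k => ρs k ω) Filter.atTop (nhds (ρ ω))) :
    Filter.Tendsto (fun k => C.sv (ρs k)) Filter.atTop (nhds (C.sv ρ)) := by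
  have hge : ∀ k ω, ρ ω ≤ ρs k ω := fun k ω => (hanti ω).le_of_tendsto (htend ω) k
  have hmono : Monotone fun k => C.sv (ρs k) := fun k l hkl =>
    C.sv_anti (hρs l) (hρs k) (Filter.Eventually.of_forall fun ω => hanti ω hkl)
  have hub : ∀ k, C.sv (ρs k) ≤ C.sv ρ := fun k =>
    C.sv_anti hρ (hρs k) (Filter.Eventually.of_forall fun ω => hge k ω)
  have hbdd : BddAbove (Set.range fun k => C.sv (ρs k)) :=
    ⟨C.sv ρ, by rintro x ⟨k, rfl⟩; exact hub k⟩
  have htends : Filter.Tendsto (fun k => C.sv (ρs k)) Filter.atTop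
      (nhds (⨆ k, C.sv (ρs k))) := tendsto_atTop_ciSup hmono hbdd
  have hsup_le : (⨆ k, C.sv (ρs k)) ≤ C.sv ρ := ciSup_le hub
  have hle_sup : C.sv ρ ≤ ⨆ k, C.sv (ρs k) := by
    refine C.sv_le hρ fun σ hσ => ?_
    set σ' : Ω → ℝ := fun ω => max (σ ω) (C.θ ω) with hσ'def
    have hσ'mem : IsStopIn ℱ T ρ σ' := C.max_theta_mem hρ hσ
    have hσ'0 : Stop0 ℱ T σ' := hσ'mem.stop0 hρ
    set π : ℕ → Ω → ℝ := fun k ω => max (σ' ω) (ρs k ω) with hπdef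
    have hπ0 : ∀ k, Stop0 ℱ T (π k) := fun k => hσ'0.max (hρs k)
    have hπmem : ∀ k, IsStopIn ℱ T (ρs k) (π k) :=
      fun k => ⟨(hπ0 k).1, fun ω => le_max_right _ _,
        fun ω => max_le (hσ'0.2.2 ω) ((hρs k).2.2 ω)⟩
    have hπanti : ∀ ω, Antitone fun k => π k ω :=
      fun ω k l hkl => max_le_max le_rfl (hanti ω hkl)
    have hπtend : ∀ ω, Filter.Tendsto (fun k => π k ω) Filter.atTop (nhds (σ' ω)) := by
      intro ω
      have h1 : Filter.Tendsto (fun k => max (σ' ω) (ρs k ω)) Filter.atTop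
          (nhds (max (σ' ω) (ρ ω))) := tendsto_const_nhds.max (htend ω)
      have h2 : max (σ' ω) (ρ ω) = σ' ω :=
        max_eq_left (le_trans (hσ.2.1 ω) (le_max_left _ _))
      rwa [h2] at h1
    have hθπ : ∀ k, C.θ ≤ᵐ[μ] π k :=
      fun k => Filter.Eventually.of_forall fun ω => le_trans (le_max_right (σ ω) (C.θ ω))
        (le_max_left _ _)
    have hRCE := C.E0_Y_RCE hσ'0 hπ0
      (Filter.Eventually.of_forall fun ω => ⟨hπanti ω, hπtend ω⟩) hθπ
    have hbd : ∀ k, C.E.E0 (C.Y (π k)) ≤ ⨆ k, C.sv (ρs k) :=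
      fun k => le_trans (C.le_sv (hρs k) (hπmem k)) (le_ciSup hbdd k)
    have h1 : C.E.E0 (C.Y σ') ≤ ⨆ k, C.sv (ρs k) :=
      le_of_tendsto hRCE (Filter.Eventually.of_forall hbd)
    exact le_trans (C.E0_Y_le_max_theta hρ hσ) h1
  have : C.sv ρ = ⨆ k, C.sv (ρs k) := le_antisymm hle_sup hsup_le
  rwa [this]

/-- The λ-stopping time package: essential infimum of `D^λ_S` with its scalar attainment. -/
lemma tauLam_package {lam : ℝ} (hlam0 : 0 < lam) (hlam1 : lam ≤ 1) {S : Ω → ℝ}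
    (hS : Stop0 ℱ T S) :
    ∃ ρ : Ω → ℝ, IsStopIn ℱ T S ρ ∧ C.θ ≤ᵐ[μ] ρ ∧
      (∀ τ ∈ C.Dset lam S, ρ ≤ᵐ[μ] τ) ∧
      lam * C.sv ρ ≤ C.E.E0 (C.Y ρ) ∧
      (∀ η : Ω → ℝ, (∀ τ ∈ C.Dset lam S, η ≤ᵐ[μ] τ) → η ≤ᵐ[μ] ρ) := by
  obtain ⟨νs, ρ, hmem, hanti, htend, hstop, hbounds, hminim⟩ := C.exists_tauLam hS hlam1
  have hρmem : IsStopIn ℱ T S ρ := ⟨hstop, fun ω => (hbounds ω).1, fun ω => (hbounds ω).2⟩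
  have hρstop : Stop0 ℱ T ρ := hρmem.stop0 hS
  have hνstop : ∀ k, Stop0 ℱ T (νs k) := fun k => (hmem k).1.stop0 hS
  have hθν : ∀ k, C.θ ≤ᵐ[μ] νs k := fun k => C.Dset_ge_theta hlam0 hS (hmem k)
  have hθρ : C.θ ≤ᵐ[μ] ρ := by
    have hall : ∀ᵐ ω ∂μ, ∀ k, C.θ ω ≤ νs k ω := MeasureTheory.ae_all_iff.mpr hθν
    filter_upwards [hall] with ω hω
    exact ge_of_tendsto (htend ω) (Filter.Eventually.of_forall hω)
  have hsc : ∀ k, lam * C.sv (νs k) ≤ C.E.E0 (C.Y (νs k)) := by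
    intro k
    have h2 := C.E0_mono (C.inD_smul (C.inD_W (hνstop k)) hlam0.le)
      (C.inD_Y (hνstop k)) (hmem k).2
    rwa [C.E0_smul (C.inD_W (hνstop k)) hlam0.le, C.E0_W (hνstop k)] at h2
  have hsvt := C.sv_RCE hρstop hνstop hanti htend
  have hYt := C.E0_Y_RCE hρstop hνstop
    (Filter.Eventually.of_forall fun ω => ⟨hanti ω, htend ω⟩) hθν
  have hfin := le_of_tendsto_of_tendsto' (hsvt.const_mul lam) hYt hsc
  refine ⟨ρ, hρmem, hθρ, hminim, hfin, ?_⟩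
  intro η hη
  have hall : ∀ᵐ ω ∂μ, ∀ k, η ω ≤ νs k ω :=
    MeasureTheory.ae_all_iff.mpr fun k => hη (νs k) (hmem k)
  filter_upwards [hall] with ω hω
  exact ge_of_tendsto (htend ω) (Filter.Eventually.of_forall hω)

/-- Localization: a.e. strictly before the essential infimum of `D^λ_S`, `Y < λ W`. -/
lemma loc_strict {lam : ℝ} (hlam0 : 0 < lam) (hlam1 : lam ≤ 1) {S : Ω → ℝ} (hS : Stop0 ℱ T S)
    {ρlam : Ω → ℝ} (hmin : ∀ τ ∈ C.Dset lam S, ρlam ≤ᵐ[μ] τ)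
    {ρ : Ω → ℝ} (hρ : Stop0 ℱ T ρ) (hρS : ∀ ω, S ω ≤ ρ ω) :
    ∀ᵐ ω ∂μ, ρ ω < ρlam ω → C.Y ρ ω < lam * C.W ρ ω := by
  obtain ⟨σs, hσmem, hconv⟩ := C.exists_seq_W hρ
  set Wt : Ω → ℝ := limsupVer (fun n => C.E.cond ρ (C.Y (σs n))) with hWtdef
  have hWtmeasF : Measurable[hρ.1.measurableSpace] Wt :=
    limsupVer_measurable fun n => C.E.cond_adapted hρ (C.inD_Y ((hσmem n).stop0 hρ)).1
      (C.inD_Y ((hσmem n).stop0 hρ)).2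
  have hWtae : Wt =ᵐ[μ] C.W ρ :=
    limsupVer_ae_eq (by filter_upwards [hconv] with ω h; exact h.2)
  set B : Set Ω := {ω | lam * Wt ω ≤ C.Y ρ ω} with hBdef
  have hBmeas : MeasurableSet[hρ.1.measurableSpace] B :=
    measurableSet_le (hWtmeasF.const_mul lam) (C.Y_measF hρ)
  set ρ'' : Ω → ℝ := fun ω => if ω ∈ B then ρ ω else T with hρ''def
  have hstop'' : IsStoppingTime ℱ (fun ω => (ρ'' ω : WithTop ℝ)) :=
    isStoppingTime_ite B (inter_le_mem_self hρ.1 hBmeas)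
      (inter_le_mem_constT hρ.1 hBmeas.compl hρ.2.2)
  have hmem'' : IsStopIn ℱ T S ρ'' := by
    refine ⟨hstop'', fun ω => ?_, fun ω => ?_⟩
    · by_cases h : ω ∈ B
      · simpa only [hρ''def, if_pos h] using hρS ω
      · simpa only [hρ''def, if_neg h] using hS.2.2 ω
    · by_cases h : ω ∈ B
      · simpa only [hρ''def, if_pos h] using hρ.2.2 ω
      · simp only [hρ''def, if_neg h]
        exact le_rfl
  have hρ''stop : Stop0 ℱ T ρ'' := hmem''.stop0 hS
  have hDmem : ρ'' ∈ C.Dset lam S := by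
    refine ⟨hmem'', ?_⟩
    filter_upwards [C.W_eq_on_eq hρ''stop hρ, C.W_eq_on_eq hρ''stop C.stop0_T,
      C.Y_congr_ptwise hρ''stop hρ, C.Y_congr_ptwise hρ''stop C.stop0_T,
      hWtae, C.W_T_eq, (C.inD_W C.stop0_T).2] with ω w1 wT y1 yT hwt wteq w0
    by_cases h : ω ∈ B
    · have he : ρ'' ω = ρ ω := by simp only [hρ''def, if_pos h]
      rw [w1 he, y1 he, ← hwt]
      exact h
    · have he : ρ'' ω = T := by simp only [hρ''def, if_neg h]
      rw [wT he, yT he, ← wteq]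
      have h0 : (0:ℝ) ≤ C.W (fun _ => T) ω := w0
      nlinarith
  have hlemin := hmin ρ'' hDmem
  filter_upwards [hlemin, hWtae] with ω k1 k2
  intro hlt
  by_contra hc
  push_neg at hc
  have hωB : ω ∈ B := by
    show lam * Wt ω ≤ C.Y ρ ω
    rw [k2]
    exact hc
  have hρ''ω : ρ'' ω = ρ ω := by simp only [hρ''def, if_pos hωB]
  have : ρlam ω ≤ ρ ω := by rw [← hρ''ω]; exact k1
  linarith

end Ctx

namespace Ctx

variable [IsProbabilityMeasure μ] (C : Ctx μ T ℱ)

/-- The key inequality: any stopping reward is dominated by a convex combination of the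
value at `S` and the value at the λ-infimum. -/
lemma key_ineq {lam : ℝ} (hlam0 : 0 < lam) (hlam1 : lam ≤ 1) {S : Ω → ℝ} (hS : Stop0 ℱ T S)
    {ρlam : Ω → ℝ} (hρmem : IsStopIn ℱ T S ρlam)
    (hmin : ∀ τ ∈ C.Dset lam S, ρlam ≤ᵐ[μ] τ)
    {σ : Ω → ℝ} (hσ : IsStopIn ℱ T S σ) :
    C.E.E0 (C.Y σ) ≤ lam * C.sv S + (1 - lam) * C.sv ρlam := by
  have hσ0 : Stop0 ℱ T σ := hσ.stop0 hS
  have hρl0 : Stop0 ℱ T ρlam := hρmem.stop0 hS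
  set ρ : Ω → ℝ := fun ω => min (σ ω) (ρlam ω) with hρdef
  have hρ0 : Stop0 ℱ T ρ := hσ0.min hρl0
  have hρS : ∀ ω, S ω ≤ ρ ω := fun ω => le_min (hσ.2.1 ω) (hρmem.2.1 ω)
  set A : Set Ω := {ω | σ ω < ρlam ω} with hAdef
  have hAF : MeasurableSet[hρl0.1.measurableSpace] A := measurableSet_lt_stop hσ0.1 hρl0.1
  have hAm : MeasurableSet A := hρl0.1.measurableSpace_le _ hAF
  have hYσ := C.inD_Y hσ0
  have hindF : Measurable[hρl0.1.measurableSpace] (A.indicator (C.Y σ)) :=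
    measurable_indicator_of_inter (C.Y_measF hσ0) hAF (fun s hs => inter_lt_mem hσ0.1 hρl0.1 hs)
  have hiii : C.E.cond ρlam (A.indicator (C.Y σ)) =ᵐ[μ] A.indicator (C.Y σ) :=
    C.cond_self hρl0 (C.inD_indicator hYσ hAm) hindF
  have hzo : C.E.cond ρlam (Aᶜ.indicator (C.Y σ)) =ᵐ[μ] Aᶜ.indicator (C.E.cond ρlam (C.Y σ)) :=
    C.cond_indicator hρl0 hYσ hAF.compl
  have hloc := C.indicator_cond_le_W hρl0 hσ0 hAF.compl
    (fun ω hω => not_lt.mp (by simpa [hAdef] using hω))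
  have hsum_eq : A.indicator (C.Y σ) + Aᶜ.indicator (C.Y σ) = C.Y σ :=
    Set.indicator_self_add_compl A (C.Y σ)
  have hsub := C.hsub hρl0 (C.inD_indicator hYσ hAm).1 (C.inD_indicator hYσ hAm).2
    (C.inD_indicator hYσ hAm.compl).1 (C.inD_indicator hYσ hAm.compl).2
  rw [hsum_eq] at hsub
  have hstrict := C.loc_strict hlam0 hlam1 hS hmin hρ0 hρS
  have hYρσ := C.Y_congr_ptwise hρ0 hσ0
  have hWρρl := C.W_eq_on_eq hρ0 hρl0
  have hbound : C.E.cond ρlam (C.Y σ) ≤ᵐ[μ]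
      fun ω => lam * C.W ρ ω + (1 - lam) * C.W ρlam ω := by
    filter_upwards [hsub, hiii, hzo, hloc, hstrict, hYρσ, hWρρl, (C.inD_W hρl0).2,
      (C.inD_W hρ0).2] with ω k2 k3 k4 k5 k6 k7 k8 w1 w2
    have hWρl0 : (0:ℝ) ≤ C.W ρlam ω := w1
    have hWρ0 : (0:ℝ) ≤ C.W ρ ω := w2
    have hk2 : C.E.cond ρlam (C.Y σ) ω ≤ C.E.cond ρlam (A.indicator (C.Y σ)) ω
        + C.E.cond ρlam (Aᶜ.indicator (C.Y σ)) ω := k2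
    by_cases h : ω ∈ A
    · have hωlt : σ ω < ρlam ω := h
      have hρσ : ρ ω = σ ω := min_eq_left hωlt.le
      have hρlt : ρ ω < ρlam ω := by rw [hρσ]; exact hωlt
      have hYlt : C.Y ρ ω < lam * C.W ρ ω := k6 hρlt
      have hYeq : C.Y ρ ω = C.Y σ ω := k7 hρσ
      have hcompl : ω ∉ Aᶜ := fun hc => hc h
      calc C.E.cond ρlam (C.Y σ) ω
          ≤ C.E.cond ρlam (A.indicator (C.Y σ)) ω
            + C.E.cond ρlam (Aᶜ.indicator (C.Y σ)) ω := hk2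
        _ = A.indicator (C.Y σ) ω + Aᶜ.indicator (C.E.cond ρlam (C.Y σ)) ω := by rw [k3, k4]
        _ = C.Y σ ω := by
            rw [Set.indicator_of_mem h, Set.indicator_of_notMem hcompl, add_zero]
        _ ≤ lam * C.W ρ ω := by rw [← hYeq]; exact hYlt.le
        _ ≤ lam * C.W ρ ω + (1 - lam) * C.W ρlam ω := by nlinarith
    · have hρρl : ρ ω = ρlam ω := min_eq_right (not_lt.mp h)
      have hWeq : C.W ρ ω = C.W ρlam ω := k8 hρρl
      have hcompl : ω ∈ Aᶜ := h
      calc C.E.cond ρlam (C.Y σ) ω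
          ≤ C.E.cond ρlam (A.indicator (C.Y σ)) ω
            + C.E.cond ρlam (Aᶜ.indicator (C.Y σ)) ω := hk2
        _ = A.indicator (C.Y σ) ω + Aᶜ.indicator (C.E.cond ρlam (C.Y σ)) ω := by rw [k3, k4]
        _ = C.E.cond ρlam (C.Y σ) ω := by
            rw [Set.indicator_of_notMem h, Set.indicator_of_mem hcompl, zero_add]
        _ ≤ C.W ρlam ω := k5 hcompl
        _ = lam * C.W ρ ω + (1 - lam) * C.W ρlam ω := by rw [hWeq]; ring
  have hsm1 : C.InD (fun ω => lam * C.W ρ ω) := C.inD_smul (C.inD_W hρ0) hlam0.le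
  have hsm2 : C.InD (fun ω => (1 - lam) * C.W ρlam ω) :=
    C.inD_smul (C.inD_W hρl0) (by linarith)
  have hfun : C.InD ((fun ω => lam * C.W ρ ω) + fun ω => (1 - lam) * C.W ρlam ω) :=
    C.inD_add hsm1 hsm2
  have h1 : C.E.E0 (C.E.cond ρlam (C.Y σ))
      ≤ C.E.E0 ((fun ω => lam * C.W ρ ω) + fun ω => (1 - lam) * C.W ρlam ω) :=
    C.E0_mono (C.inD_cond hρl0 hYσ) hfun hbound
  have h2 : C.E.E0 ((fun ω => lam * C.W ρ ω) + fun ω => (1 - lam) * C.W ρlam ω)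
      ≤ lam * C.sv ρ + (1 - lam) * C.sv ρlam := by
    have h3 := C.E0_add_le hsm1 hsm2
    rw [C.E0_smul (C.inD_W hρ0) hlam0.le, C.E0_smul (C.inD_W hρl0) (by linarith : (0:ℝ) ≤ 1 - lam),
      C.E0_W hρ0, C.E0_W hρl0] at h3
    exact h3
  have hEc : C.E.E0 (C.Y σ) = C.E.E0 (C.E.cond ρlam (C.Y σ)) := (C.E0_cond hρl0 hYσ).symm
  have h3 : C.sv ρ ≤ C.sv S :=
    C.sv_anti hS hρ0 (Filter.Eventually.of_forall hρS)
  have h4 : lam * C.sv ρ ≤ lam * C.sv S := mul_le_mul_of_nonneg_left h3 hlam0.le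
  rw [hEc]
  linarith

/-- No value is lost waiting until the λ-infimum. -/
lemma sv_eq_tauLam {lam : ℝ} (hlam0 : 0 < lam) (hlam1 : lam < 1) {S : Ω → ℝ}
    (hS : Stop0 ℱ T S) {ρlam : Ω → ℝ} (hρmem : IsStopIn ℱ T S ρlam)
    (hmin : ∀ τ ∈ C.Dset lam S, ρlam ≤ᵐ[μ] τ) :
    C.sv S = C.sv ρlam := by
  have h1 : C.sv S ≤ lam * C.sv S + (1 - lam) * C.sv ρlam :=
    C.sv_le hS fun σ hσ => C.key_ineq hlam0 hlam1.le hS hρmem hmin hσ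
  have h2 : C.sv ρlam ≤ C.sv S :=
    C.sv_anti hS (hρmem.stop0 hS) (Filter.Eventually.of_forall fun ω => hρmem.2.1 ω)
  have h3 : (1 - lam) * C.sv S ≤ (1 - lam) * C.sv ρlam := by linarith
  have h4 : C.sv S ≤ C.sv ρlam :=
    le_of_mul_le_mul_left h3 (by linarith)
  exact le_antisymm h4 h2

end Ctx

namespace Ctx

variable [IsProbabilityMeasure μ] (C : Ctx μ T ℱ)

/-- Any conditionally optimal stopping time lies in `Dopt`. -/
lemma opt_mem_Dopt {S τ : Ω → ℝ} (hS : Stop0 ℱ T S) (hτ : IsStopIn ℱ T S τ)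
    (hopt : C.W S =ᵐ[μ] C.E.cond S (C.Y τ)) : τ ∈ C.Dopt S := by
  have hτ0 : Stop0 ℱ T τ := hτ.stop0 hS
  have hE1 : C.sv S = C.E.E0 (C.Y τ) := by
    rw [← C.E0_W hS,
      C.E0_congr (C.inD_W hS) (C.inD_cond hS (C.inD_Y hτ0)) hopt, C.E0_cond hS (C.inD_Y hτ0)]
  have h3 : C.sv τ ≤ C.sv S :=
    C.sv_anti hS hτ0 (Filter.Eventually.of_forall fun ω => hτ.2.1 ω)
  have h4 : C.E.E0 (C.Y τ) ≤ C.sv τ := C.le_sv hτ0 (IsStopIn.refl' hτ0)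
  have h5 : C.sv τ = C.E.E0 (C.Y τ) := le_antisymm (by rw [← hE1] at h4 ⊢; exact h3) h4
  have hYW : C.Y τ ≤ᵐ[μ] C.W τ := by
    have hcs := C.cond_self hτ0 (C.inD_Y hτ0) (C.Y_measF hτ0)
    have hlw := C.le_W hτ0 (IsStopIn.refl' hτ0)
    filter_upwards [hcs, hlw] with ω k1 k2
    rw [← k1]
    exact k2
  have hE0eq : C.E.E0 (C.Y τ) = C.E.E0 (C.W τ) := by rw [C.E0_W hτ0, ← h5]
  exact ⟨hτ, (C.ae_eq_of_E0_eq (C.inD_Y hτ0) (C.inD_W hτ0) hYW hE0eq).symm⟩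

/-- MAIN EXISTENCE: a minimal optimal stopping time for the problem at `S`. -/
lemma exists_optimal {S : Ω → ℝ} (hS : Stop0 ℱ T S) :
    ∃ τh : Ω → ℝ, IsStopIn ℱ T S τh ∧ C.θ ≤ᵐ[μ] τh ∧
      C.W S =ᵐ[μ] C.E.cond S (C.Y τh) ∧ C.E.E0 (C.Y τh) = C.sv S ∧ τh ∈ C.Dopt S ∧
      ∀ τ ∈ C.Dopt S, τh ≤ᵐ[μ] τ := by
  classical
  set lam : ℕ → ℝ := fun n => 1 - 1 / (n + 2) with hlamdef
  have hlam0 : ∀ n, 0 < lam n := by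
    intro n
    have h1 : (1:ℝ) / (n + 2) ≤ 1/2 := by
      apply div_le_div_of_nonneg_left one_pos.le two_pos
      push_cast; linarith [Nat.cast_nonneg (α := ℝ) n]
    simp only [hlamdef]
    linarith
  have hlam1 : ∀ n, lam n < 1 := by
    intro n
    have h1 : (0:ℝ) < 1 / (n + 2) := by positivity
    simp only [hlamdef]
    linarith
  have hlam_mono : Monotone lam := by
    intro a b hab
    simp only [hlamdef]
    have : (1:ℝ) / (b + 2) ≤ 1 / (a + 2) := by
      apply one_div_le_one_div_of_le (by positivity)
      push_cast
      exact_mod_cast (by linarith [(Nat.cast_le (α := ℝ)).mpr hab] : (a:ℝ) + 2 ≤ (b:ℝ) + 2)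
    linarith
  have hpack := fun n => C.tauLam_package (hlam0 n) (hlam1 n).le hS
  choose ρl hρmem hθρ hminl hscal hmaxlb using hpack
  have hDsub : ∀ {a b : ℝ} {τ : Ω → ℝ}, 0 ≤ a → a ≤ b → τ ∈ C.Dset b S → τ ∈ C.Dset a S := by
    intro a b τ ha hab hτ
    refine ⟨hτ.1, ?_⟩
    filter_upwards [hτ.2, (C.inD_W (hτ.1.stop0 hS)).2] with ω k1 k2
    have h0 : (0:ℝ) ≤ C.W τ ω := k2
    nlinarith
  have hρl_mono : ∀ n, ρl n ≤ᵐ[μ] ρl (n + 1) := by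
    intro n
    refine hmaxlb (n + 1) (ρl n) fun τ hτ => ?_
    exact hminl n τ (hDsub (hlam0 n).le (hlam_mono (Nat.le_succ n)) hτ)
  -- pointwise monotone envelope
  let πsub : ℕ → {p : Ω → ℝ // IsStopIn ℱ T S p} :=
    fun n => Nat.rec (motive := fun _ => {p : Ω → ℝ // IsStopIn ℱ T S p})
      ⟨ρl 0, hρmem 0⟩
      (fun k prev => ⟨fun ω => max (prev.1 ω) (ρl (k + 1) ω),
        ⟨prev.2.1.max (hρmem (k + 1)).1,
          fun ω => le_trans (prev.2.2.1 ω) (le_max_left _ _),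
          fun ω => max_le (prev.2.2.2 ω) ((hρmem (k + 1)).2.2 ω)⟩⟩) n
  set πs : ℕ → Ω → ℝ := fun n => (πsub n).1 with hπsdef
  have hπmem : ∀ n, IsStopIn ℱ T S (πs n) := fun n => (πsub n).2
  have hπmono : ∀ ω, Monotone fun n => πs n ω := by
    intro ω
    refine monotone_nat_of_le_succ fun n => ?_
    exact le_max_left _ _
  have hπeq : ∀ n, πs n =ᵐ[μ] ρl n := by
    intro n
    induction n with
    | zero => exact Filter.EventuallyEq.refl _ _
    | succ k ih =>
        have h1 := hρl_mono k
        filter_upwards [ih, h1] with ω k1 k2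
        show max (πs k ω) (ρl (k + 1) ω) = ρl (k + 1) ω
        rw [k1]
        exact max_eq_right (k2 : ρl k ω ≤ ρl (k + 1) ω)
  have hπbdd : ∀ ω, BddAbove (Set.range fun n => πs n ω) :=
    fun ω => ⟨T, by rintro x ⟨n, rfl⟩; exact (hπmem n).2.2 ω⟩
  set τh : Ω → ℝ := fun ω => ⨆ n, πs n ω with hτhdef
  have hτhtend : ∀ ω, Filter.Tendsto (fun n => πs n ω) Filter.atTop (nhds (τh ω)) :=
    fun ω => tendsto_atTop_ciSup (hπmono ω) (hπbdd ω)
  have hτhmem : IsStopIn ℱ T S τh := by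
    refine ⟨isStoppingTime_iSup (fun n => (hπmem n).1) (fun n ω => (hπmem n).2.2 ω), ?_, ?_⟩
    · intro ω
      exact le_trans ((hπmem 0).2.1 ω) (le_ciSup (hπbdd ω) 0)
    · intro ω
      exact ciSup_le fun n => (hπmem n).2.2 ω
  have hτh0 : Stop0 ℱ T τh := hτhmem.stop0 hS
  have hπ0 : ∀ n, Stop0 ℱ T (πs n) := fun n => (hπmem n).stop0 hS
  have hθπ : ∀ n, C.θ ≤ᵐ[μ] πs n := by
    intro n
    filter_upwards [hθρ 0, hπeq 0] with ω k1 k2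
    calc C.θ ω ≤ πs 0 ω := by rw [k2]; exact k1
      _ ≤ πs n ω := hπmono ω (Nat.zero_le n)
  have hθτh : C.θ ≤ᵐ[μ] τh := by
    filter_upwards [hθπ 0] with ω k1
    exact le_trans k1 (le_ciSup (hπbdd ω) 0)
  -- scalar squeeze
  have hsv_eq : ∀ n, C.sv (ρl n) = C.sv S :=
    fun n => (C.sv_eq_tauLam (hlam0 n) (hlam1 n) hS (hρmem n) (hminl n)).symm
  have hEπ : ∀ n, C.E.E0 (C.Y (πs n)) = C.E.E0 (C.Y (ρl n)) := by
    intro n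
    exact C.E0_congr (C.inD_Y (hπ0 n)) (C.inD_Y ((hρmem n).stop0 hS))
      (C.Y_congr_ae (hπ0 n) ((hρmem n).stop0 hS) (hπeq n))
  have hlow : ∀ n, lam n * C.sv S ≤ C.E.E0 (C.Y (πs n)) := by
    intro n
    rw [hEπ n]
    have := hscal n
    rwa [hsv_eq n] at this
  have hup : ∀ n, C.E.E0 (C.Y (πs n)) ≤ C.sv S := by
    intro n
    rw [hEπ n, ← hsv_eq n]
    exact C.le_sv ((hρmem n).stop0 hS) (IsStopIn.refl' ((hρmem n).stop0 hS))
  have hlamt : Filter.Tendsto (fun n : ℕ => lam n * C.sv S) Filter.atTop (nhds (C.sv S)) := by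
    have h2 : Filter.Tendsto (fun n : ℕ => 1 / ((n:ℝ) + 2)) Filter.atTop (nhds 0) := by
      have h3 : Filter.Tendsto (fun n : ℕ => 1 / ((n:ℝ) + 1)) Filter.atTop (nhds 0) :=
        tendsto_one_div_add_atTop_nhds_zero_nat
      refine tendsto_of_tendsto_of_tendsto_of_le_of_le tendsto_const_nhds h3 ?_ ?_
      · intro n; positivity
      · intro n
        apply one_div_le_one_div_of_le (by positivity)
        push_cast; linarith
    have h4 : Filter.Tendsto lam Filter.atTop (nhds 1) := by
      have h5 := (tendsto_const_nhds (x := (1:ℝ)) (f := Filter.atTop (α := ℕ))).sub h2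
      rw [sub_zero] at h5
      exact h5
    have h6 := h4.mul_const (C.sv S)
    rw [one_mul] at h6
    exact h6
  have hsqueeze : Filter.Tendsto (fun n => C.E.E0 (C.Y (πs n))) Filter.atTop (nhds (C.sv S)) :=
    tendsto_of_tendsto_of_tendsto_of_le_of_le hlamt tendsto_const_nhds hlow hup
  have hLCE := C.E0_Y_LCE hτh0 hπ0
    (Filter.Eventually.of_forall fun ω => ⟨hπmono ω, hτhtend ω⟩) hθπ
  have hEτh : C.E.E0 (C.Y τh) = C.sv S := tendsto_nhds_unique hLCE hsqueeze
  -- conditional optimality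
  have hle := C.le_W hS hτhmem
  have hE0eq : C.E.E0 (C.E.cond S (C.Y τh)) = C.E.E0 (C.W S) := by
    rw [C.E0_cond hS (C.inD_Y hτh0), C.E0_W hS, hEτh]
  have hopt : C.W S =ᵐ[μ] C.E.cond S (C.Y τh) :=
    (C.ae_eq_of_E0_eq (C.inD_cond hS (C.inD_Y hτh0)) (C.inD_W hS) hle hE0eq).symm
  have hDopt : τh ∈ C.Dopt S := C.opt_mem_Dopt hS hτhmem hopt
  refine ⟨τh, hτhmem, hθτh, hopt, hEτh, hDopt, ?_⟩
  intro τ hτ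
  have hτDset : ∀ n, τ ∈ C.Dset (lam n) S :=
    fun n => C.Dopt_subset_Dset (hlam1 n).le hS hτ
  have hπle : ∀ n, πs n ≤ᵐ[μ] τ := by
    intro n
    filter_upwards [hπeq n, hminl n τ (hτDset n)] with ω k1 k2
    rw [k1]; exact k2
  have hall : ∀ᵐ ω ∂μ, ∀ n, πs n ω ≤ τ ω := MeasureTheory.ae_all_iff.mpr hπle
  filter_upwards [hall] with ω hω
  exact ciSup_le hω

end Ctx

namespace Ctx

variable [IsProbabilityMeasure μ] (C : Ctx μ T ℱ)

lemma Dopt_transfer {ρ₁ ρ₂ : Ω → ℝ} (h1 : Stop0 ℱ T ρ₁) (h2 : Stop0 ℱ T ρ₂)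
    (hle : ρ₁ ≤ᵐ[μ] ρ₂) {κ : Ω → ℝ} (hκ : κ ∈ C.Dopt ρ₂) :
    ∃ κ' ∈ C.Dopt ρ₁, κ' =ᵐ[μ] κ := by
  obtain ⟨hκmem, hκeq⟩ := hκ
  set κ' : Ω → ℝ := fun ω => max (κ ω) (ρ₁ ω) with hκ'def
  have hκ'mem : IsStopIn ℱ T ρ₁ κ' :=
    ⟨hκmem.1.max h1.1, fun ω => le_max_right _ _,
      fun ω => max_le (hκmem.2.2 ω) (h1.2.2 ω)⟩
  have hκ'ae : κ' =ᵐ[μ] κ := by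
    filter_upwards [hle] with ω hω
    exact max_eq_left (le_trans hω (hκmem.2.1 ω))
  have hκ0 : Stop0 ℱ T κ := hκmem.stop0 h2
  have hκ'0 : Stop0 ℱ T κ' := hκ'mem.stop0 h1
  refine ⟨κ', ⟨hκ'mem, ?_⟩, hκ'ae⟩
  calc C.W κ' =ᵐ[μ] C.W κ := C.W_congr_ae hκ'0 hκ0 hκ'ae
    _ =ᵐ[μ] C.Y κ := hκeq
    _ =ᵐ[μ] C.Y κ' := (C.Y_congr_ae hκ'0 hκ0 hκ'ae).symm

/-- Left-continuity of the scalar value along increasing sequences of stopping times. -/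
lemma sv_LCE {τ : Ω → ℝ} (hτ : Stop0 ℱ T τ) {τs : ℕ → Ω → ℝ} (hτs : ∀ n, Stop0 ℱ T (τs n))
    (hconv : ∀ᵐ ω ∂μ, Monotone (fun n => τs n ω) ∧
      Filter.Tendsto (fun n => τs n ω) Filter.atTop (nhds (τ ω))) :
    Filter.Tendsto (fun n => C.sv (τs n)) Filter.atTop (nhds (C.sv τ)) := by
  classical
  have hopt := fun n => C.exists_optimal (hτs n)
  choose π hπmem hθπ hπopt hπE hπD hπmin using hopt
  obtain ⟨πτ, hπτmem, hθπτ, hπτopt, hπτE, hπτD, hπτmin⟩ := C.exists_optimal hτ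
  have htle : ∀ n, τs n ≤ᵐ[μ] τs (n + 1) := by
    intro n
    filter_upwards [hconv] with ω hω
    exact hω.1 (Nat.le_succ n)
  have htleτ : ∀ n, τs n ≤ᵐ[μ] τ := by
    intro n
    filter_upwards [hconv] with ω hω
    exact hω.1.ge_of_tendsto hω.2 n
  have hπmono : ∀ n, π n ≤ᵐ[μ] π (n + 1) := by
    intro n
    obtain ⟨κ', hκ'D, hκ'ae⟩ :=
      C.Dopt_transfer (hτs n) (hτs (n + 1)) (htle n) (hπD (n + 1))
    filter_upwards [hπmin n κ' hκ'D, hκ'ae] with ω k1 k2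
    rw [← k2]
    exact k1
  have hπleτ : ∀ n, π n ≤ᵐ[μ] πτ := by
    intro n
    obtain ⟨κ', hκ'D, hκ'ae⟩ := C.Dopt_transfer (hτs n) hτ (htleτ n) hπτD
    filter_upwards [hπmin n κ' hκ'D, hκ'ae] with ω k1 k2
    rw [← k2]
    exact k1
  -- pointwise monotone envelope
  let πsub : ℕ → {p : Ω → ℝ // Stop0 ℱ T p} :=
    fun n => Nat.rec (motive := fun _ => {p : Ω → ℝ // Stop0 ℱ T p})
      ⟨π 0, (hπmem 0).stop0 (hτs 0)⟩
      (fun k prev => ⟨fun ω => max (prev.1 ω) (π (k + 1) ω),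
        prev.2.max ((hπmem (k + 1)).stop0 (hτs (k + 1)))⟩) n
  set πs : ℕ → Ω → ℝ := fun n => (πsub n).1 with hπsdef
  have hπs0 : ∀ n, Stop0 ℱ T (πs n) := fun n => (πsub n).2
  have hπsmono : ∀ ω, Monotone fun n => πs n ω :=
    fun ω => monotone_nat_of_le_succ fun n => le_max_left _ _
  have hπseq : ∀ n, πs n =ᵐ[μ] π n := by
    intro n
    induction n with
    | zero => exact Filter.EventuallyEq.refl _ _
    | succ k ih =>
        filter_upwards [ih, hπmono k] with ω k1 k2
        show max (πs k ω) (π (k + 1) ω) = π (k + 1) ω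
        rw [k1]
        exact max_eq_right k2
  have hπsbdd : ∀ ω, BddAbove (Set.range fun n => πs n ω) :=
    fun ω => ⟨T, by rintro x ⟨n, rfl⟩; exact (hπs0 n).2.2 ω⟩
  set πh : Ω → ℝ := fun ω => ⨆ n, πs n ω with hπhdef
  have hπhtend : ∀ ω, Filter.Tendsto (fun n => πs n ω) Filter.atTop (nhds (πh ω)) :=
    fun ω => tendsto_atTop_ciSup (hπsmono ω) (hπsbdd ω)
  have hπh0 : Stop0 ℱ T πh := by
    refine ⟨isStoppingTime_iSup (fun n => (hπs0 n).1) (fun n ω => (hπs0 n).2.2 ω), ?_, ?_⟩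
    · intro ω
      exact le_trans ((hπs0 0).2.1 ω) (le_ciSup (hπsbdd ω) 0)
    · intro ω
      exact ciSup_le fun n => (hπs0 n).2.2 ω
  have hθπs : ∀ n, C.θ ≤ᵐ[μ] πs n := by
    intro n
    filter_upwards [hθπ 0, hπseq 0] with ω k1 k2
    calc C.θ ω ≤ πs 0 ω := by rw [k2]; exact k1
      _ ≤ πs n ω := hπsmono ω (Nat.zero_le n)
  have hLCE := C.E0_Y_LCE hπh0 hπs0
    (Filter.Eventually.of_forall fun ω => ⟨hπsmono ω, hπhtend ω⟩) hθπs
  have hEeq : ∀ n, C.E.E0 (C.Y (πs n)) = C.sv (τs n) := by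
    intro n
    rw [C.E0_congr (C.inD_Y (hπs0 n)) (C.inD_Y ((hπmem n).stop0 (hτs n)))
      (C.Y_congr_ae (hπs0 n) ((hπmem n).stop0 (hτs n)) (hπseq n))]
    exact hπE n
  -- identify the limit as sv τ
  have hπhτ : τ ≤ᵐ[μ] πh := by
    have hall : ∀ᵐ ω ∂μ, ∀ n, π n ω ≤ πh ω := by
      refine MeasureTheory.ae_all_iff.mpr fun n => ?_
      filter_upwards [hπseq n] with ω k1
      rw [← k1]
      exact le_ciSup (hπsbdd ω) n
    filter_upwards [hconv, hall] with ω hω hall'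
    refine le_of_tendsto hω.2 (Filter.Eventually.of_forall fun n => ?_)
    exact le_trans ((hπmem n).2.1 ω) (hall' n)
  have hub : C.E.E0 (C.Y πh) ≤ C.sv τ := by
    set κ : Ω → ℝ := fun ω => max (πh ω) (τ ω) with hκdef
    have hκmem : IsStopIn ℱ T τ κ :=
      ⟨hπh0.1.max hτ.1, fun ω => le_max_right _ _,
        fun ω => max_le (hπh0.2.2 ω) (hτ.2.2 ω)⟩
    have hκae : κ =ᵐ[μ] πh := by
      filter_upwards [hπhτ] with ω hω
      exact max_eq_left hω
    rw [C.E0_congr (C.inD_Y hπh0) (C.inD_Y (hκmem.stop0 hτ))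
      (C.Y_congr_ae hπh0 (hκmem.stop0 hτ) hκae.symm)]
    exact C.le_sv hτ hκmem
  have hlb : ∀ n, C.sv τ ≤ C.sv (τs n) := fun n => C.sv_anti (hτs n) hτ (htleτ n)
  have hEπh : C.E.E0 (C.Y πh) = C.sv τ := by
    refine le_antisymm hub ?_
    have h1 : Filter.Tendsto (fun n => C.sv (τs n)) Filter.atTop (nhds (C.E.E0 (C.Y πh))) := by
      have h2 : (fun n => C.sv (τs n)) = fun n => C.E.E0 (C.Y (πs n)) :=
        funext fun n => (hEeq n).symm
      rw [h2]
      exact hLCE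
    exact ge_of_tendsto h1 (Filter.Eventually.of_forall hlb)
  have h2 : (fun n => C.sv (τs n)) = fun n => C.E.E0 (C.Y (πs n)) :=
    funext fun n => (hEeq n).symm
  rw [h2, ← hEπh]
  exact hLCE

end Ctx

/-- the modified-reward problem admits an optimal stopping time, `τ'(S)`
is the minimal optimal stopping time, and the value function family `v'` is LCE.
Here `E_S[X'(τ)] := E_S[X'(τ) + 1] − 1`. -/
theorem modified_reward_optimal [IsProbabilityMeasure μ] (hT : 0 < T)
    (hcf : CompleteFiltration μ ℱ) (hrcf : RightContinuousFiltration ℱ)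
    (𝔈 : FExp μ T ℱ) (h6 : 𝔈.Subadditive) (h7 : 𝔈.PosHom)
    (X : (Ω → ℝ) → Ω → ℝ) (hX : Admissible 𝔈 X) (hXce : CE 𝔈 X)
    (hbdd : BddRewardE0 𝔈 X)
    (θ : Ω → ℝ) (hθ : Stop0 ℱ T θ)
    (X' : (Ω → ℝ) → Ω → ℝ)
    (hX' : ∀ τ : Ω → ℝ, X' τ = fun ω => if θ ω ≤ τ ω then X τ ω else -1)
    (v' : (Ω → ℝ) → Ω → ℝ)
    (hv' : ∀ S : Ω → ℝ, Stop0 ℱ T S → IsEssSupFam μ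
      {g | ∃ τ : Ω → ℝ, IsStopIn ℱ T S τ ∧
        g = fun ω => 𝔈.cond S (fun ω' => X' τ ω' + 1) ω - 1} (v' S)) :
    -- existence of an optimal stopping time for v'(S)
    (∀ S : Ω → ℝ, Stop0 ℱ T S → ∃ τo : Ω → ℝ, IsStopIn ℱ T S τo ∧
      v' S =ᵐ[μ] fun ω => 𝔈.cond S (fun ω' => X' τo ω' + 1) ω - 1) ∧
    -- τ'(S) is the minimal optimal stopping time
    (∀ S : Ω → ℝ, Stop0 ℱ T S → ∀ ts : Ω → ℝ, (∀ ω, S ω ≤ ts ω ∧ ts ω ≤ T) →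
      IsEssInfFam μ {τ | IsStopIn ℱ T S τ ∧ v' τ =ᵐ[μ] X' τ} ts →
      IsStoppingTime ℱ (fun ω => (ts ω : WithTop ℝ)) ∧
        (v' S =ᵐ[μ] fun ω => 𝔈.cond S (fun ω' => X' ts ω' + 1) ω - 1) ∧
        ∀ τ : Ω → ℝ, IsStopIn ℱ T S τ →
          (v' S =ᵐ[μ] fun ω => 𝔈.cond S (fun ω' => X' τ ω' + 1) ω - 1) →
          ts ≤ᵐ[μ] τ) ∧
    -- the family v' is LCE
    ∀ τ : Ω → ℝ, Stop0 ℱ T τ → ∀ τs : ℕ → Ω → ℝ, (∀ n, Stop0 ℱ T (τs n)) →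
      (∀ᵐ ω ∂μ, Monotone (fun n => τs n ω) ∧
        Tendsto (fun n => τs n ω) atTop (nhds (τ ω))) →
      Tendsto (fun n => 𝔈.E0 (fun ω => v' (τs n) ω + 1) - 1) atTop
        (nhds (𝔈.E0 (fun ω => v' τ ω + 1) - 1)) := by
  classical
  obtain ⟨Cb, hCb⟩ := hbdd
  set C : Ctx μ T ℱ :=
    { E := 𝔈, hsub := h6, hpos := h7, X := X, hXadm := hX, hXce := hXce,
      Cb := Cb, hCb := hCb, θ := θ, hθ := hθ,
      Y := fun τ ω => X' τ ω + 1,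
      hYdef := by
        intro τ ω
        simp only [hX']
        split_ifs <;> ring,
      v' := v', hv' := hv', hT := hT, hcf := hcf, hrcf := hrcf } with hCdef
  -- correspondence between the statement's optimality set and `Dopt`
  have hiff : ∀ S : Ω → ℝ, Stop0 ℱ T S → ∀ τ : Ω → ℝ,
      ((IsStopIn ℱ T S τ ∧ v' τ =ᵐ[μ] X' τ) ↔ τ ∈ C.Dopt S) := by
    intro S hS τ
    constructor
    · rintro ⟨hmem, heq⟩
      refine ⟨hmem, ?_⟩
      filter_upwards [heq] with ω hω
      have hω' : v' τ ω = X' τ ω := hω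
      show C.v' τ ω + 1 = X' τ ω + 1
      have e : C.v' τ ω = v' τ ω := rfl
      rw [e, hω']
    · rintro ⟨hmem, heq⟩
      refine ⟨hmem, ?_⟩
      filter_upwards [heq] with ω hω
      have hω' : C.v' τ ω + 1 = X' τ ω + 1 := hω
      show v' τ ω = X' τ ω
      have : v' τ ω + 1 = X' τ ω + 1 := hω'
      linarith
  -- conversion between the statement's conditional optimality and `W S =ᵐ cond S (Y τ)`
  have hoptiff : ∀ S : Ω → ℝ, Stop0 ℱ T S → ∀ τ : Ω → ℝ,
      ((v' S =ᵐ[μ] fun ω => 𝔈.cond S (fun ω' => X' τ ω' + 1) ω - 1) ↔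
        C.W S =ᵐ[μ] C.E.cond S (C.Y τ)) := by
    intro S hS τ
    constructor
    · intro h
      filter_upwards [h] with ω hω
      have hω' : v' S ω = 𝔈.cond S (fun ω' => X' τ ω' + 1) ω - 1 := hω
      have e : C.E.cond S (C.Y τ) ω = 𝔈.cond S (fun ω' => X' τ ω' + 1) ω := rfl
      show C.v' S ω + 1 = C.E.cond S (C.Y τ) ω
      rw [e]
      have : v' S ω = C.v' S ω := rfl
      linarith [hω']
    · intro h
      filter_upwards [h] with ω hω
      have hω' : C.v' S ω + 1 = C.E.cond S (C.Y τ) ω := hω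
      have e : C.E.cond S (C.Y τ) ω = 𝔈.cond S (fun ω' => X' τ ω' + 1) ω := rfl
      show v' S ω = 𝔈.cond S (fun ω' => X' τ ω' + 1) ω - 1
      rw [← e]
      have : C.v' S ω = v' S ω := rfl
      linarith [hω']
  refine ⟨?_, ?_, ?_⟩
  · -- existence
    intro S hS
    obtain ⟨τh, hτhmem, _, hopt, _, _, _⟩ := C.exists_optimal hS
    exact ⟨τh, hτhmem, (hoptiff S hS τh).mpr hopt⟩
  · -- minimal optimal stopping time
    intro S hS ts hbounds hessinf
    obtain ⟨τh, hτhmem, hθτh, hopt, hEτh, hDopt, hmin⟩ := C.exists_optimal hS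
    have hτh0 : Stop0 ℱ T τh := hτhmem.stop0 hS
    have hτhDst : IsStopIn ℱ T S τh ∧ v' τh =ᵐ[μ] X' τh := (hiff S hS τh).mpr hDopt
    have hts_le : ts ≤ᵐ[μ] τh := hessinf.1 τh hτhDst
    have hle_ts : τh ≤ᵐ[μ] ts := by
      refine hessinf.2 τh fun f hf => ?_
      exact hmin f ((hiff S hS f).mp hf)
    have htsae : ts =ᵐ[μ] τh := hts_le.antisymm hle_ts
    have htsstop : IsStoppingTime ℱ (fun ω => (ts ω : WithTop ℝ)) := isStoppingTime_congr_ae hcf hτh0.1 htsae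
    have hts0 : Stop0 ℱ T ts :=
      ⟨htsstop, fun ω => le_trans (hS.2.1 ω) (hbounds ω).1, fun ω => (hbounds ω).2⟩
    refine ⟨htsstop, ?_, ?_⟩
    · -- optimality of ts
      refine (hoptiff S hS ts).mpr ?_
      have hYae : C.Y ts =ᵐ[μ] C.Y τh := C.Y_congr_ae hts0 hτh0 htsae
      have hcc : C.E.cond S (C.Y ts) =ᵐ[μ] C.E.cond S (C.Y τh) :=
        C.cond_congr hS (C.inD_Y hts0) (C.inD_Y hτh0) hYae
      exact hopt.trans hcc.symm
    · -- minimality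
      intro τ hτmem hτopt
      have hτDopt : τ ∈ C.Dopt S :=
        C.opt_mem_Dopt hS hτmem ((hoptiff S hS τ).mp hτopt)
      exact hessinf.1 τ ((hiff S hS τ).mpr hτDopt)
  · -- LCE of v'
    intro τ hτ τs hτs hconv
    have h1 : ∀ ρ : Ω → ℝ, Stop0 ℱ T ρ → 𝔈.E0 (fun ω => v' ρ ω + 1) = C.sv ρ :=
      fun ρ hρ => C.E0_W hρ
    have h2 : (fun n => 𝔈.E0 (fun ω => v' (τs n) ω + 1) - 1)
        = fun n => C.sv (τs n) - 1 := funext fun n => by rw [h1 (τs n) (hτs n)]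
    rw [h2, h1 τ hτ]
    exact (C.sv_LCE hτ hτs hconv).sub_const 1

end OptMultStop
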